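/- arXiv:1408.5851 — 5 statements merged into one kernel-verified Lean document; each statement's English description precedes it below -/
import Mathlib

section
/- Fix n ≥ 3. Let W ⊂ ℂⁿ be a real 3-dimensional subspace. Given any unit vector x ∈ ℂⁿ and any unit vector e orthogonal to both x and Jx (J the complex structure), there exists V in the SU(n)-orbit of W with x ∈ V and e ∈ V. -/
open Module

/-- Any real 3-dimensional subspace of `ℂⁿ` (`n ≥ 3`) contains a pair of vectors which
is orthonormal for the complex inner product. -/
lemma exists_complex_orthonormal_pair_of_finrank_three {n : ℕ} (hn : 3 ≤ n)
    (W : Submodule ℝ (EuclideanSpace ℂ (Fin n))) (hW : finrank ℝ W = 3) :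
    ∃ w₁ w₂ : EuclideanSpace ℂ (Fin n), w₁ ∈ W ∧ w₂ ∈ W ∧ ‖w₁‖ = 1 ∧ ‖w₂‖ = 1 ∧
      (inner ℂ w₁ w₂ : ℂ) = 0 := by
  have hE : finrank ℝ (EuclideanSpace ℂ (Fin n)) = 2 * n := by
    rw [← Module.finrank_mul_finrank ℝ ℂ, Complex.finrank_real_complex, finrank_euclideanSpace_fin]
  -- pick w₁
  have hWbot : W ≠ ⊥ := by
    intro h
    rw [h, finrank_bot] at hW
    omega
  obtain ⟨w, hwW, hw0⟩ := Submodule.exists_mem_ne_zero_of_ne_bot hWbot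
  set w₁ : EuclideanSpace ℂ (Fin n) := ‖w‖⁻¹ • w with hw₁def
  have hw₁W : w₁ ∈ W := W.smul_mem _ hwW
  have hw₁ : ‖w₁‖ = 1 := by
    rw [hw₁def, norm_smul, norm_inv, norm_norm, inv_mul_cancel₀ (norm_ne_zero_iff.mpr hw0)]
  have hw₁0 : w₁ ≠ 0 := by
    intro h; rw [h, norm_zero] at hw₁; norm_num at hw₁
  -- the orthogonal complement of ℂ w₁
  have hU : finrank ℂ ((ℂ ∙ w₁)ᗮ) = n - 1 := by
    have h1 : finrank ℂ (ℂ ∙ w₁) = 1 := finrank_span_singleton hw₁0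
    have := Submodule.finrank_add_finrank_orthogonal (𝕜 := ℂ) (ℂ ∙ w₁)
    rw [h1, finrank_euclideanSpace_fin] at this
    omega
  have hUr : finrank ℝ ((ℂ ∙ w₁)ᗮ.restrictScalars ℝ) = 2 * (n - 1) := by
    have : finrank ℝ ↥(Submodule.restrictScalars ℝ (ℂ ∙ w₁)ᗮ) = finrank ℝ ↥((ℂ ∙ w₁)ᗮ) := rfl
    rw [this, ← Module.finrank_mul_finrank ℝ ℂ ↥((ℂ ∙ w₁)ᗮ), Complex.finrank_real_complex, hU]
  -- intersection is nonzero
  have hint : W ⊓ (ℂ ∙ w₁)ᗮ.restrictScalars ℝ ≠ ⊥ := by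
    intro h
    have hsum := Submodule.finrank_sup_add_finrank_inf_eq W ((ℂ ∙ w₁)ᗮ.restrictScalars ℝ)
    rw [h, finrank_bot, hW, hUr] at hsum
    have hle : finrank ℝ (W ⊔ (ℂ ∙ w₁)ᗮ.restrictScalars ℝ : Submodule ℝ _) ≤ 2 * n := by
      rw [← hE]; exact Submodule.finrank_le _
    omega
  obtain ⟨v, hv, hv0⟩ := Submodule.exists_mem_ne_zero_of_ne_bot hint
  set w₂ : EuclideanSpace ℂ (Fin n) := ‖v‖⁻¹ • v with hw₂def
  have hvW : v ∈ W := hv.1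
  have hvU : v ∈ (ℂ ∙ w₁)ᗮ := hv.2
  refine ⟨w₁, w₂, hw₁W, W.smul_mem _ hvW, hw₁, ?_, ?_⟩
  · rw [hw₂def, norm_smul, norm_inv, norm_norm, inv_mul_cancel₀ (norm_ne_zero_iff.mpr hv0)]
  · have hw₂U : w₂ ∈ (ℂ ∙ w₁)ᗮ := (ℂ ∙ w₁)ᗮ.smul_of_tower_mem _ hvU
    exact (Submodule.mem_orthogonal _ _).mp hw₂U w₁ (Submodule.mem_span_singleton_self w₁)

/-- A complex-orthonormal pair extends to an orthonormal basis of `ℂⁿ` whose first two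
vectors are the given pair. -/
lemma exists_orthonormalBasis_of_pair {n : ℕ} (hn : 3 ≤ n)
    (x e : EuclideanSpace ℂ (Fin n)) (hx : ‖x‖ = 1) (he : ‖e‖ = 1)
    (hxe : (inner ℂ x e : ℂ) = 0) :
    ∃ b : OrthonormalBasis (Fin n) ℂ (EuclideanSpace ℂ (Fin n)),
      b ⟨0, by omega⟩ = x ∧ b ⟨1, by omega⟩ = e := by
  set i0 : Fin n := ⟨0, by omega⟩
  set i1 : Fin n := ⟨1, by omega⟩
  set v : Fin n → EuclideanSpace ℂ (Fin n) := fun i => if i = i0 then x else if i = i1 then e else 0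
  have hcard : finrank ℂ (EuclideanSpace ℂ (Fin n)) = Fintype.card (Fin n) := by
    simp [finrank_euclideanSpace_fin]
  have hv : Orthonormal ℂ (({i0, i1} : Set (Fin n)).restrict v) := by
    have h01 : i0 ≠ i1 := by simp [i0, i1, Fin.ext_iff]
    have hv0 : v i0 = x := if_pos rfl
    have hv1 : v i1 = e := by
      show (if i1 = i0 then x else if i1 = i1 then e else 0) = e
      rw [if_neg h01.symm, if_pos rfl]
    have hxx : (inner ℂ x x : ℂ) = 1 := by
      rw [inner_self_eq_norm_sq_to_K, hx]; norm_num
    have hee : (inner ℂ e e : ℂ) = 1 := by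
      rw [inner_self_eq_norm_sq_to_K, he]; norm_num
    have hex' : (inner ℂ e x : ℂ) = 0 := by
      rw [← inner_conj_symm, hxe, map_zero]
    rw [orthonormal_iff_ite]
    rintro ⟨i, hi⟩ ⟨j, hj⟩
    simp only [Set.mem_insert_iff, Set.mem_singleton_iff] at hi hj
    simp only [Set.restrict_apply, Subtype.mk.injEq]
    rcases hi with rfl | rfl <;> rcases hj with rfl | rfl <;>
      simp [Set.restrict, hv0, hv1, hxx, hee, hxe, hex', h01, h01.symm, hx, he]
  obtain ⟨b, hb⟩ := hv.exists_orthonormalBasis_extension_of_card_eq hcard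
  exact ⟨b, hb i0 (by simp), hb i1 (by simp)⟩

/-- The determinant of the isometry taking one orthonormal basis to another is the
determinant of the change-of-basis matrix. -/
lemma det_trans_eq {n : ℕ} (a c : OrthonormalBasis (Fin n) ℂ (EuclideanSpace ℂ (Fin n))) :
    LinearMap.det (a.repr.trans c.repr.symm).toLinearEquiv.toLinearMap = a.toBasis.det ⇑c := by
  rw [← LinearMap.det_toMatrix a.toBasis, Basis.det_apply]
  congr 1
  ext i j
  rw [LinearMap.toMatrix_apply, Basis.toMatrix_apply, OrthonormalBasis.coe_toBasis,
    OrthonormalBasis.coe_toBasis_repr_apply]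
  have : (a.repr.trans c.repr.symm) (a j) = c j := by
    simp [LinearIsometryEquiv.trans_apply, OrthonormalBasis.repr_self]
  simp [this]

/-- An orthonormal basis can be corrected by multiplying one chosen vector by a
unit scalar. -/
lemma exists_corrected_basis {n : ℕ} (c : OrthonormalBasis (Fin n) ℂ (EuclideanSpace ℂ (Fin n)))
    (μ : ℂ) (hμ : ‖μ‖ = 1) (j : Fin n) :
    ∃ c2 : OrthonormalBasis (Fin n) ℂ (EuclideanSpace ℂ (Fin n)),
      ∀ i, c2 i = (if i = j then μ else 1) • c i := by
  have hμ0 : μ ≠ 0 := by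
    intro h; rw [h, norm_zero] at hμ; norm_num at hμ
  set wu : Fin n → ℂˣ := fun i => if i = j then Units.mk0 μ hμ0 else 1 with hwudef
  have hwu_coe : ∀ i, (wu i : ℂ) = if i = j then μ else 1 := by
    intro i; rw [hwudef]; by_cases h : i = j <;> simp [h]
  have hwu_norm : ∀ i, ‖(wu i : ℂ)‖ = 1 := by
    intro i; rw [hwu_coe]; by_cases h : i = j <;> simp [h, hμ]
  set c2b : Basis (Fin n) ℂ (EuclideanSpace ℂ (Fin n)) := c.toBasis.unitsSMul wu with hc2bdef
  have hc2b_apply : ∀ i, c2b i = (wu i : ℂ) • c i := by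
    intro i
    rw [hc2bdef, Basis.unitsSMul_apply, OrthonormalBasis.coe_toBasis, Units.smul_def]
  have hc2b_on : Orthonormal ℂ ⇑c2b := by
    rw [orthonormal_iff_ite]
    intro i k
    rw [hc2b_apply, hc2b_apply, inner_smul_left, inner_smul_right]
    rcases eq_or_ne i k with rfl | hik
    · rw [if_pos rfl, orthonormal_iff_ite.mp c.orthonormal i i, if_pos rfl, mul_one]
      rw [mul_comm, Complex.mul_conj]
      norm_cast
      rw [← Complex.sq_norm, hwu_norm, one_pow]
    · rw [if_neg hik, orthonormal_iff_ite.mp c.orthonormal i k, if_neg hik,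
        mul_zero, mul_zero]
  refine ⟨c2b.toOrthonormalBasis hc2b_on, fun i => ?_⟩
  rw [show (c2b.toOrthonormalBasis hc2b_on) i = c2b i from
    congrFun (Basis.coe_toOrthonormalBasis c2b hc2b_on) i, hc2b_apply, hwu_coe]

set_option maxHeartbeats 800000 in
/-- Given a real 3-dimensional subspace `W ⊂ ℂⁿ` (`n ≥ 3`), any unit vector `x`
and any unit vector `e` orthogonal (for the real inner product) to both `x` and
`J x = i x`, there is an element of the `SU(n)`-orbit of `W` containing both
`x` and `e`. -/
theorem su_orbit_of_real_three_plane {n : ℕ} (hn : 3 ≤ n)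
    (W : Submodule ℝ (EuclideanSpace ℂ (Fin n)))
    (hW : Module.finrank ℝ W = 3)
    (x e : EuclideanSpace ℂ (Fin n)) (hx : ‖x‖ = 1) (he : ‖e‖ = 1)
    (hex : ((inner ℂ x e : ℂ)).re = 0)
    (heJx : ((inner ℂ ((Complex.I : ℂ) • x) e : ℂ)).re = 0) :
    ∃ g : EuclideanSpace ℂ (Fin n) ≃ₗᵢ[ℂ] EuclideanSpace ℂ (Fin n),
      LinearMap.det (g.toLinearEquiv.toLinearMap) = 1 ∧
      x ∈ W.map ((g.toLinearEquiv.toLinearMap).restrictScalars ℝ) ∧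
      e ∈ W.map ((g.toLinearEquiv.toLinearMap).restrictScalars ℝ) := by
  -- `e` is complex-orthogonal to `x`
  have hxe : (inner ℂ x e : ℂ) = 0 := by
    rw [inner_smul_left] at heJx
    simp only [Complex.conj_I] at heJx
    apply Complex.ext
    · exact hex
    · simpa using heJx
  -- orthonormal pair inside W
  obtain ⟨w₁, w₂, hw₁W, hw₂W, hw₁, hw₂, hw₁₂⟩ :=
    exists_complex_orthonormal_pair_of_finrank_three hn W hW
  obtain ⟨a, ha0, ha1⟩ := exists_orthonormalBasis_of_pair hn w₁ w₂ hw₁ hw₂ hw₁₂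
  obtain ⟨c, hc0, hc1⟩ := exists_orthonormalBasis_of_pair hn x e hx he hxe
  -- determinant of the naive isometry
  have hδ : ‖a.toBasis.det ⇑c‖ = 1 := a.det_to_matrix_orthonormalBasis c
  have hμ : ‖(starRingEnd ℂ) (a.toBasis.det ⇑c)‖ = 1 := by
    rw [RCLike.norm_conj]; exact hδ
  obtain ⟨c2, hc2⟩ :=
    exists_corrected_basis c ((starRingEnd ℂ) (a.toBasis.det ⇑c)) hμ ⟨2, by omega⟩
  refine ⟨a.repr.trans c2.repr.symm, ?_, ?_, ?_⟩
  · -- determinant is 1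
    rw [det_trans_eq a c2]
    have hcoe : ⇑c2 = fun i =>
        (if i = (⟨2, by omega⟩ : Fin n) then (starRingEnd ℂ) (a.toBasis.det ⇑c) else 1)
          • c i := funext hc2
    rw [hcoe]
    have hms := (a.toBasis.det).toMultilinearMap.map_smul_univ
      (fun i => (if i = (⟨2, by omega⟩ : Fin n) then (starRingEnd ℂ) (a.toBasis.det ⇑c) else 1))
      (fun i => c i)
    simp only [AlternatingMap.coe_multilinearMap] at hms
    rw [hms, smul_eq_mul]
    rw [Finset.prod_ite_eq' Finset.univ (⟨2, by omega⟩ : Fin n)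
      (fun _ => (starRingEnd ℂ) (a.toBasis.det ⇑c))]
    simp only [Finset.mem_univ, if_true]
    rw [show (fun i => c i) = ⇑c from rfl, mul_comm, Complex.mul_conj]
    norm_cast
    rw [Complex.normSq_eq_norm_sq, hδ, one_pow]
  · -- x is in the image
    refine Submodule.mem_map.mpr ⟨w₁, hw₁W, ?_⟩
    show (a.repr.trans c2.repr.symm) w₁ = x
    rw [← ha0]
    have h02 : (⟨0, by omega⟩ : Fin n) ≠ ⟨2, by omega⟩ := by simp [Fin.ext_iff]
    have := hc2 ⟨0, by omega⟩
    rw [if_neg h02, one_smul, hc0] at this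
    rw [← this]
    simp [LinearIsometryEquiv.trans_apply, OrthonormalBasis.repr_self]
  · -- e is in the image
    refine Submodule.mem_map.mpr ⟨w₂, hw₂W, ?_⟩
    show (a.repr.trans c2.repr.symm) w₂ = e
    rw [← ha1]
    have h12 : (⟨1, by omega⟩ : Fin n) ≠ ⟨2, by omega⟩ := by simp [Fin.ext_iff]
    have := hc2 ⟨1, by omega⟩
    rw [if_neg h12, one_smul, hc1] at this
    rw [← this]
    simp [LinearIsometryEquiv.trans_apply, OrthonormalBasis.repr_self]
end

section
/- Fix n ≥ 3. Let W ⊂ ℂⁿ be a real 2-plane with orthonormal basis x, v. Then the number |⟨Jx, v⟩| is independent of the choice of orthonormal basis of W, and two real 2-planes W, W′ lie in the same SU(n)-orbit if and only if the corresponding invariants |⟨Jx, v⟩| agree. -/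
open scoped ComplexConjugate

noncomputable section KaehlerAngleAux

namespace KaehlerAngleAux

variable {n : ℕ}

lemma inner_combo (x v : EuclideanSpace ℂ (Fin n)) (hx : ‖x‖ = 1) (hv : ‖v‖ = 1)
    (a b c d : ℝ) :
    (inner ℂ ((a:ℝ) • x + (b:ℝ) • v) ((c:ℝ) • x + (d:ℝ) • v) : ℂ)
      = (a*c + b*d : ℝ) + (a*d : ℝ) * (inner ℂ x v : ℂ) + (b*c : ℝ) * conj (inner ℂ x v : ℂ) := by
  have hxx : (inner ℂ x x : ℂ) = 1 := by rw [inner_self_eq_norm_sq_to_K, hx]; norm_num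
  have hvv : (inner ℂ v v : ℂ) = 1 := by rw [inner_self_eq_norm_sq_to_K, hv]; norm_num
  have hvx : (inner ℂ v x : ℂ) = conj (inner ℂ x v : ℂ) := by rw [← inner_conj_symm]
  simp only [← Complex.coe_smul]
  simp only [inner_add_add_self, inner_add_left, inner_add_right,
    inner_smul_left, inner_smul_right, inner_smul_real_left, inner_smul_real_right,
    hxx, hvv, hvx, Complex.conj_ofReal, Complex.real_smul]
  push_cast
  ring

-- basis independence
lemma indep (x v x' v' : EuclideanSpace ℂ (Fin n)) (hx : ‖x‖ = 1) (hv : ‖v‖ = 1)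
    (hxv : (inner ℂ x v : ℂ).re = 0) (hx' : ‖x'‖ = 1) (hv' : ‖v'‖ = 1)
    (hxv' : (inner ℂ x' v' : ℂ).re = 0)
    (hsp : Submodule.span ℝ ({x, v} : Set (EuclideanSpace ℂ (Fin n)))
      = Submodule.span ℝ ({x', v'} : Set (EuclideanSpace ℂ (Fin n)))) :
    |(inner ℂ x' v' : ℂ).im| = |(inner ℂ x v : ℂ).im| := by
  have hxm : x' ∈ Submodule.span ℝ ({x, v} : Set (EuclideanSpace ℂ (Fin n))) := by
    rw [hsp]; exact Submodule.subset_span (by simp)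
  have hvm : v' ∈ Submodule.span ℝ ({x, v} : Set (EuclideanSpace ℂ (Fin n))) := by
    rw [hsp]; exact Submodule.subset_span (by simp)
  rw [Submodule.mem_span_pair] at hxm hvm
  obtain ⟨a, b, hab⟩ := hxm
  obtain ⟨c, d, hcd⟩ := hvm
  set z : ℂ := inner ℂ x v with hz
  have hcz : conj z = -z := by
    apply Complex.ext <;> simp [hxv]
  -- norms
  have h1 : a^2 + b^2 = 1 := by
    have := inner_combo x v hx hv a b a b
    rw [hab, inner_self_eq_norm_sq_to_K, hx'] at this
    have := congrArg Complex.re this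
    simp [hxv, ← hz, Complex.add_re, Complex.ofReal_re, Complex.mul_re, hcz] at this
    nlinarith [this]
  have h2 : c^2 + d^2 = 1 := by
    have := inner_combo x v hx hv c d c d
    rw [hcd, inner_self_eq_norm_sq_to_K, hv'] at this
    have := congrArg Complex.re this
    simp [hxv, ← hz, Complex.add_re, Complex.ofReal_re, Complex.mul_re, hcz] at this
    nlinarith [this]
  have h3 : (inner ℂ x' v' : ℂ) = ((a*c + b*d : ℝ) : ℂ) + ((a*d - b*c : ℝ)) * z := by
    rw [← hab, ← hcd, inner_combo x v hx hv, hcz, ← hz]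
    push_cast; ring
  have hre : a*c + b*d = 0 := by
    have := congrArg Complex.re h3
    rw [hxv'] at this
    simp [Complex.add_re, Complex.mul_re, hxv] at this
    linarith [this]
  have him : (inner ℂ x' v' : ℂ).im = (a*d - b*c) * z.im := by
    have := congrArg Complex.im h3
    simpa [Complex.add_im, Complex.mul_im, hxv] using this
  have h4 : (a*d - b*c)^2 = 1 := by nlinarith [h1, h2, hre]
  have h5 : |a*d - b*c| = 1 := by
    rw [← Real.sqrt_one, ← h4, Real.sqrt_sq_eq_abs]
  rw [him, abs_mul, h5, one_mul]

-- helper: map orthonormal family on s (avoiding index 2) to another, with det 1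
lemma lemB (hn : 3 ≤ n) (s : Set (Fin n)) [DecidablePred (· ∈ s)]
    (hs2 : ((⟨2, by omega⟩ : Fin n)) ∉ s)
    (f f' : Fin n → EuclideanSpace ℂ (Fin n))
    (hf : Orthonormal ℂ (s.restrict f)) (hf' : Orthonormal ℂ (s.restrict f')) :
    ∃ g : EuclideanSpace ℂ (Fin n) ≃ₗᵢ[ℂ] EuclideanSpace ℂ (Fin n),
      LinearMap.det (g.toLinearEquiv.toLinearMap) = 1 ∧ ∀ i ∈ s, g (f i) = f' i := by
  classical
  have hcard : Module.finrank ℂ (EuclideanSpace ℂ (Fin n)) = Fintype.card (Fin n) := by simp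
  obtain ⟨b, hb⟩ := hf.exists_orthonormalBasis_extension_of_card_eq hcard
  obtain ⟨c, hc⟩ := hf'.exists_orthonormalBasis_extension_of_card_eq hcard
  set i₂ : Fin n := ⟨2, by omega⟩
  set d : ℂ := (b.toBasis.toMatrix ⇑c).det with hd
  have hdu : conj d * d = 1 := by
    have hm := b.toMatrix_orthonormalBasis_mem_unitary c
    have := (Matrix.det_of_mem_unitary hm).1
    simpa [Matrix.star_eq_conjTranspose, hd] using this
  set φ : ℂ := conj d with hφ
  have hφd : d * φ = 1 := by rw [hφ, mul_comm]; exact hdu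
  have hφ2 : conj φ * φ = 1 := by
    rw [hφ, Complex.conj_conj]; exact hφd
  -- modified family
  set h : Fin n → EuclideanSpace ℂ (Fin n) := fun i => if i = i₂ then φ • c i else c i with hh
  have hon : Orthonormal ℂ h := by
    rw [orthonormal_iff_ite]
    intro i j
    have hcij := orthonormal_iff_ite.mp c.orthonormal i j
    by_cases hi : i = i₂ <;> by_cases hj : j = i₂
    · subst hi; subst hj
      simp only [hh, if_pos rfl, inner_smul_left, inner_smul_right]
      rw [hcij]
      rw [if_pos trivial, if_pos rfl, mul_one, mul_comm]
      exact hφ2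
    · subst hi
      simp only [hh, if_pos rfl, if_neg hj, inner_smul_left]
      rw [hcij]
      have : i₂ ≠ j := fun hcon => hj (hcon.symm)
      simp [this]
    · subst hj
      simp only [hh, if_pos rfl, if_neg hi, inner_smul_right]
      rw [hcij]
      simp [hi]
    · simp only [hh, if_neg hi, if_neg hj]
      exact hcij
  have hspan : ⊤ ≤ Submodule.span ℂ (Set.range h) := by
    rw [← c.toBasis.span_eq]
    refine Submodule.span_le.mpr ?_
    rintro _ ⟨i, rfl⟩
    simp only [OrthonormalBasis.coe_toBasis]
    by_cases hi : i = i₂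
    · have : c i = conj φ • h i := by
        simp only [hh, hi, if_pos rfl, smul_smul, hφ2, one_smul]
      rw [this]
      exact Submodule.smul_mem _ _ (Submodule.subset_span ⟨i, rfl⟩)
    · have : c i = h i := by simp [hh, hi]
      rw [this]; exact Submodule.subset_span ⟨i, rfl⟩
  let c'' : OrthonormalBasis (Fin n) ℂ (EuclideanSpace ℂ (Fin n)) :=
    OrthonormalBasis.mk hon hspan
  let g := b.repr.trans c''.repr.symm
  have hgb : ∀ i, g (b i) = h i := by
    intro i
    simp [g, c'', OrthonormalBasis.repr_self, OrthonormalBasis.repr_symm_single,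
      OrthonormalBasis.coe_mk]
  refine ⟨g, ?_, ?_⟩
  · -- determinant
    rw [← LinearMap.det_toMatrix b.toBasis]
    have hmat : LinearMap.toMatrix b.toBasis b.toBasis (g.toLinearEquiv.toLinearMap)
        = (b.toBasis.toMatrix ⇑c).updateCol i₂ (φ • (b.toBasis.repr (c i₂))) := by
      ext i j
      rw [LinearMap.toMatrix_apply]
      simp only [OrthonormalBasis.coe_toBasis, LinearEquiv.coe_coe,
        LinearIsometryEquiv.coe_toLinearEquiv]
      rw [hgb j]
      by_cases hj : j = i₂
      · simp [hh, hj, Matrix.updateCol_apply, map_smul, Module.Basis.toMatrix_apply]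
      · simp [hh, hj, Matrix.updateCol_apply, Module.Basis.toMatrix_apply]
    rw [hmat]
    rw [Matrix.det_updateCol_smul]
    have : (b.toBasis.toMatrix ⇑c).updateCol i₂ (b.toBasis.repr (c i₂)) = b.toBasis.toMatrix ⇑c := by
      ext i j
      by_cases hj : j = i₂ <;> simp [Matrix.updateCol_apply, hj, Module.Basis.toMatrix_apply]
    rw [this, ← hd, mul_comm]
    exact hφd
  · intro i hi
    have hif : i ≠ i₂ := fun hcon => hs2 (hcon ▸ hi)
    have : f i = b i := (hb i hi).symm
    rw [this, hgb i]
    simp [hh, hif, hc i hi]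

lemma lemA0 (hn : 3 ≤ n)
    (lemB : ∀ (s : Set (Fin n)) (_ : DecidablePred (· ∈ s)),
      ((⟨2, by omega⟩ : Fin n)) ∉ s →
      ∀ (f f' : Fin n → EuclideanSpace ℂ (Fin n)),
      Orthonormal ℂ (s.restrict f) → Orthonormal ℂ (s.restrict f') →
      ∃ g : EuclideanSpace ℂ (Fin n) ≃ₗᵢ[ℂ] EuclideanSpace ℂ (Fin n),
        LinearMap.det (g.toLinearEquiv.toLinearMap) = 1 ∧ ∀ i ∈ s, g (f i) = f' i)
    (x v y w : EuclideanSpace ℂ (Fin n))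
    (hx : ‖x‖ = 1) (hv : ‖v‖ = 1) (hy : ‖y‖ = 1) (hw : ‖w‖ = 1)
    (hin : (inner ℂ x v : ℂ) = inner ℂ y w) :
    ∃ g : EuclideanSpace ℂ (Fin n) ≃ₗᵢ[ℂ] EuclideanSpace ℂ (Fin n),
      LinearMap.det (g.toLinearEquiv.toLinearMap) = 1 ∧ g x = y ∧ g v = w := by
  classical
  set i₀ : Fin n := ⟨0, by omega⟩ with hi₀def
  set i₁ : Fin n := ⟨1, by omega⟩ with hi₁def
  set i₂ : Fin n := ⟨2, by omega⟩ with hi₂def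
  have h01 : i₁ ≠ i₀ := by
    intro hcon; have := congrArg Fin.val hcon; simp [hi₀def, hi₁def] at this
  set z : ℂ := inner ℂ x v with hz
  set v₀ : EuclideanSpace ℂ (Fin n) := v - z • x with hv₀
  set w₀ : EuclideanSpace ℂ (Fin n) := w - z • y with hw₀
  have hxx : (inner ℂ x x : ℂ) = 1 := by rw [inner_self_eq_norm_sq_to_K, hx]; norm_num
  have hyy : (inner ℂ y y : ℂ) = 1 := by rw [inner_self_eq_norm_sq_to_K, hy]; norm_num
  have hvv : (inner ℂ v v : ℂ) = 1 := by rw [inner_self_eq_norm_sq_to_K, hv]; norm_num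
  have hww : (inner ℂ w w : ℂ) = 1 := by rw [inner_self_eq_norm_sq_to_K, hw]; norm_num
  have hxv₀ : (inner ℂ x v₀ : ℂ) = 0 := by
    rw [hv₀, inner_sub_right, inner_smul_right, hxx, mul_one, ← hz, sub_self]
  have hyw₀ : (inner ℂ y w₀ : ℂ) = 0 := by
    rw [hw₀, inner_sub_right, inner_smul_right, hyy, mul_one]
    exact sub_eq_zero.mpr hin.symm
  have hv₀v₀ : (inner ℂ v₀ v₀ : ℂ) = 1 - conj z * z := by
    have h3 : (inner ℂ v x : ℂ) = conj z := by rw [← inner_conj_symm, ← hz]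
    rw [hv₀, inner_sub_left, inner_smul_left, inner_sub_right, inner_sub_right,
      inner_smul_right, inner_smul_right, hvv, hxx, ← hz, h3]
    ring
  have hw₀w₀ : (inner ℂ w₀ w₀ : ℂ) = 1 - conj z * z := by
    have h1 : (inner ℂ w y : ℂ) = conj z := by rw [← inner_conj_symm, ← hin]
    have h2 : (inner ℂ y w : ℂ) = z := hin.symm
    rw [hw₀, inner_sub_left, inner_smul_left, inner_sub_right, inner_sub_right,
      inner_smul_right, inner_smul_right, hww, hyy, h1, h2]
    ring
  by_cases hc : v₀ = 0
  · have hw0 : w₀ = 0 := by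
      have : (inner ℂ w₀ w₀ : ℂ) = 0 := by rw [hw₀w₀, ← hv₀v₀, hc, inner_zero_left]
      exact inner_self_eq_zero.mp this
    have hveq : v = z • x := by
      have := hc; rw [hv₀, sub_eq_zero] at this; exact this
    have hweq : w = z • y := by
      have := hw0; rw [hw₀, sub_eq_zero] at this; exact this
    have h2s : i₂ ∉ ({i₀} : Set (Fin n)) := by
      simp only [Set.mem_singleton_iff]
      intro hcon; have := congrArg Fin.val hcon; simp [hi₀def, hi₂def] at this
    have hof : Orthonormal ℂ (({i₀} : Set (Fin n)).restrict (fun _ => x)) := by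
      rw [orthonormal_iff_ite]
      rintro ⟨i, hi⟩ ⟨j, hj⟩
      simp only [Set.mem_singleton_iff] at hi hj
      subst hi; subst hj
      simpa [Set.restrict] using hxx
    have hof' : Orthonormal ℂ (({i₀} : Set (Fin n)).restrict (fun _ => y)) := by
      rw [orthonormal_iff_ite]
      rintro ⟨i, hi⟩ ⟨j, hj⟩
      simp only [Set.mem_singleton_iff] at hi hj
      subst hi; subst hj
      simpa [Set.restrict] using hyy
    obtain ⟨g, hdet, hmap⟩ := lemB {i₀} (by infer_instance) h2s _ _ hof hof'
    refine ⟨g, hdet, hmap i₀ rfl, ?_⟩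
    rw [hveq, hweq, map_smul, hmap i₀ rfl]
  · have hr : ‖v₀‖ ≠ 0 := fun hcon => hc (norm_eq_zero.mp hcon)
    set r : ℝ := ‖v₀‖ with hrdef
    have hnorm_eq : ‖w₀‖ = r := by
      have h1 : (inner ℂ w₀ w₀ : ℂ) = inner ℂ v₀ v₀ := by rw [hv₀v₀, hw₀w₀]
      rw [inner_self_eq_norm_sq_to_K, inner_self_eq_norm_sq_to_K] at h1
      have h2 : ‖w₀‖^2 = ‖v₀‖^2 := by exact_mod_cast h1
      calc ‖w₀‖ = Real.sqrt (‖w₀‖^2) := (Real.sqrt_sq (norm_nonneg _)).symm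
        _ = Real.sqrt (‖v₀‖^2) := by rw [h2]
        _ = r := Real.sqrt_sq (norm_nonneg _)
    have hrC : (r : ℂ) ≠ 0 := by exact_mod_cast hr
    set u : EuclideanSpace ℂ (Fin n) := ((r : ℂ))⁻¹ • v₀ with hu
    set u' : EuclideanSpace ℂ (Fin n) := ((r : ℂ))⁻¹ • w₀ with hu'
    have hinner_v₀ : (inner ℂ v₀ v₀ : ℂ) = (r : ℂ)^2 := by
      rw [inner_self_eq_norm_sq_to_K]; norm_cast
    have hinner_w₀ : (inner ℂ w₀ w₀ : ℂ) = (r : ℂ)^2 := by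
      rw [inner_self_eq_norm_sq_to_K, hnorm_eq]; norm_cast
    have huu : (inner ℂ u u : ℂ) = 1 := by
      rw [hu, inner_smul_left, inner_smul_right, hinner_v₀, map_inv₀, Complex.conj_ofReal]
      field_simp
    have hu'u' : (inner ℂ u' u' : ℂ) = 1 := by
      rw [hu', inner_smul_left, inner_smul_right, hinner_w₀, map_inv₀, Complex.conj_ofReal]
      field_simp
    have hxu : (inner ℂ x u : ℂ) = 0 := by
      rw [hu, inner_smul_right, hxv₀, mul_zero]
    have hyu' : (inner ℂ y u' : ℂ) = 0 := by
      rw [hu', inner_smul_right, hyw₀, mul_zero]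
    set f : Fin n → EuclideanSpace ℂ (Fin n) := fun i => if i = i₀ then x else u with hf
    set f' : Fin n → EuclideanSpace ℂ (Fin n) := fun i => if i = i₀ then y else u' with hf'
    have h2s : i₂ ∉ ({i₀, i₁} : Set (Fin n)) := by
      simp only [Set.mem_insert_iff, Set.mem_singleton_iff]
      rintro (hcon | hcon) <;>
        · have := congrArg Fin.val hcon; simp [hi₀def, hi₁def, hi₂def] at this
    have key : ∀ (a b : EuclideanSpace ℂ (Fin n)), (inner ℂ a a : ℂ) = 1 →
        (inner ℂ b b : ℂ) = 1 → (inner ℂ a b : ℂ) = 0 →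
        Orthonormal ℂ (({i₀, i₁} : Set (Fin n)).restrict
          (fun i => if i = i₀ then a else b)) := by
      intro a b haa hbb hab
      have hba : (inner ℂ b a : ℂ) = 0 := by rw [← inner_conj_symm, hab, map_zero]
      have haa' : ‖a‖ = 1 := by
        have := haa; rw [inner_self_eq_norm_sq_to_K] at this; norm_cast at this
        exact (pow_eq_one_iff_of_nonneg (norm_nonneg a) two_ne_zero).mp (Complex.ofReal_eq_one.mp this)
      have hbb' : ‖b‖ = 1 := by
        have := hbb; rw [inner_self_eq_norm_sq_to_K] at this; norm_cast at this
        exact (pow_eq_one_iff_of_nonneg (norm_nonneg b) two_ne_zero).mp (Complex.ofReal_eq_one.mp this)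
      rw [orthonormal_iff_ite]
      rintro ⟨i, hi⟩ ⟨j, hj⟩
      simp only [Set.mem_insert_iff, Set.mem_singleton_iff] at hi hj
      rcases hi with rfl | rfl <;> rcases hj with rfl | rfl <;>
        simp [Set.restrict, h01, haa, hbb, hab, hba, Subtype.mk.injEq, h01.symm, haa', hbb']
    obtain ⟨g, hdet, hmap⟩ := lemB {i₀, i₁} (by infer_instance) h2s f f'
      (key x u hxx huu hxu) (key y u' hyy hu'u' hyu')
    have hgx : g x = y := by
      have := hmap i₀ (by simp)
      simpa [hf, hf'] using this
    have hgu : g u = u' := by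
      have := hmap i₁ (by simp)
      simpa [hf, hf', h01] using this
    have hveq : v = z • x + (r : ℂ) • u := by
      rw [hu, smul_smul, mul_inv_cancel₀ hrC, one_smul, hv₀]; abel
    have hweq : w = z • y + (r : ℂ) • u' := by
      rw [hu', smul_smul, mul_inv_cancel₀ hrC, one_smul, hw₀]; abel
    refine ⟨g, hdet, hgx, ?_⟩
    rw [hveq, hweq, map_add, map_smul, map_smul, hgx, hgu]


lemma lemA (hn : 3 ≤ n)
    (x v y w : EuclideanSpace ℂ (Fin n))
    (hx : ‖x‖ = 1) (hv : ‖v‖ = 1) (hy : ‖y‖ = 1) (hw : ‖w‖ = 1)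
    (hin : (inner ℂ x v : ℂ) = inner ℂ y w) :
    ∃ g : EuclideanSpace ℂ (Fin n) ≃ₗᵢ[ℂ] EuclideanSpace ℂ (Fin n),
      LinearMap.det (g.toLinearEquiv.toLinearMap) = 1 ∧ g x = y ∧ g v = w :=
  lemA0 hn (fun s inst hs2 f f' hf hf' => @lemB n hn s inst hs2 f f' hf hf')
    x v y w hx hv hy hw hin


lemma KA_reI (x v : EuclideanSpace ℂ (Fin n)) :
    ((inner ℂ ((Complex.I : ℂ) • x) v : ℂ)).re = ((inner ℂ x v : ℂ)).im := by
  rw [inner_smul_left]; simp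

lemma KA_map_span_pair (g : EuclideanSpace ℂ (Fin n) ≃ₗᵢ[ℂ] EuclideanSpace ℂ (Fin n))
    (x v : EuclideanSpace ℂ (Fin n)) :
    (Submodule.span ℝ ({x, v} : Set (EuclideanSpace ℂ (Fin n)))).map
      ((g.toLinearEquiv.toLinearMap).restrictScalars ℝ)
      = Submodule.span ℝ ({g x, g v} : Set (EuclideanSpace ℂ (Fin n))) := by
  rw [Submodule.map_span]
  congr 1
  rw [Set.image_pair]
  rfl

lemma KA_span_pair_neg (y w : EuclideanSpace ℂ (Fin n)) :
    Submodule.span ℝ ({y, -w} : Set (EuclideanSpace ℂ (Fin n)))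
      = Submodule.span ℝ ({y, w} : Set (EuclideanSpace ℂ (Fin n))) := by
  refine le_antisymm (Submodule.span_le.mpr ?_) (Submodule.span_le.mpr ?_)
  · rintro a ha
    simp only [Set.mem_insert_iff, Set.mem_singleton_iff] at ha
    rcases ha with rfl | rfl
    · exact Submodule.subset_span (by simp)
    · exact neg_mem (Submodule.subset_span (by simp))
  · rintro a ha
    simp only [Set.mem_insert_iff, Set.mem_singleton_iff] at ha
    rcases ha with rfl | rfl
    · exact Submodule.subset_span (by simp)
    · have : a = -(-a) := by simp
      rw [this]
      exact neg_mem (Submodule.subset_span (by simp))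



end KaehlerAngleAux

open KaehlerAngleAux in
/-- The Kähler angle invariant `|⟨Jx, v⟩|` of a real 2-plane `W ⊂ ℂⁿ` with real
orthonormal basis `{x, v}` is independent of the choice of orthonormal basis,
and (for `n ≥ 3`) two real 2-planes lie in the same `SU(n)`-orbit iff their
invariants agree. -/
theorem kaehler_angle_complete_su_invariant {n : ℕ} (hn : 3 ≤ n)
    (W W' : Submodule ℝ (EuclideanSpace ℂ (Fin n)))
    (x v y w : EuclideanSpace ℂ (Fin n))
    (hx : ‖x‖ = 1) (hv : ‖v‖ = 1) (hxv : ((inner ℂ x v : ℂ)).re = 0)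
    (hW : W = Submodule.span ℝ ({x, v} : Set (EuclideanSpace ℂ (Fin n))))
    (hy : ‖y‖ = 1) (hw : ‖w‖ = 1) (hyw : ((inner ℂ y w : ℂ)).re = 0)
    (hW' : W' = Submodule.span ℝ ({y, w} : Set (EuclideanSpace ℂ (Fin n)))) :
    (∀ x' v' : EuclideanSpace ℂ (Fin n), ‖x'‖ = 1 → ‖v'‖ = 1 →
        ((inner ℂ x' v' : ℂ)).re = 0 →
        W = Submodule.span ℝ ({x', v'} : Set (EuclideanSpace ℂ (Fin n))) →
        |((inner ℂ ((Complex.I : ℂ) • x') v' : ℂ)).re| =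
          |((inner ℂ ((Complex.I : ℂ) • x) v : ℂ)).re|) ∧
    ((∃ g : EuclideanSpace ℂ (Fin n) ≃ₗᵢ[ℂ] EuclideanSpace ℂ (Fin n),
        LinearMap.det (g.toLinearEquiv.toLinearMap) = 1 ∧
        W.map ((g.toLinearEquiv.toLinearMap).restrictScalars ℝ) = W') ↔
      |((inner ℂ ((Complex.I : ℂ) • x) v : ℂ)).re| =
        |((inner ℂ ((Complex.I : ℂ) • y) w : ℂ)).re|) := by
  constructor
  · intro x' v' hx' hv' hxv' hW2
    rw [KA_reI, KA_reI]
    exact indep x v x' v' hx hv hxv hx' hv' hxv' (hW.symm.trans hW2)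
  · rw [KA_reI, KA_reI]
    constructor
    · rintro ⟨g, hdet, hmap⟩
      have hinn : (inner ℂ (g x) (g v) : ℂ) = inner ℂ x v := g.inner_map_map x v
      have hspan : Submodule.span ℝ ({y, w} : Set (EuclideanSpace ℂ (Fin n)))
          = Submodule.span ℝ ({g x, g v} : Set (EuclideanSpace ℂ (Fin n))) := by
        rw [← hW', ← hmap, hW, KA_map_span_pair]
      have := indep y w (g x) (g v) hy hw hyw
        (by rw [g.norm_map]; exact hx) (by rw [g.norm_map]; exact hv)
        (by rw [hinn]; exact hxv) hspan
      rw [hinn] at this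
      exact this
    · intro him
      rcases abs_eq_abs.mp him with heq | heq
      · have hin : (inner ℂ x v : ℂ) = inner ℂ y w := by
          apply Complex.ext
          · rw [hxv, hyw]
          · exact heq
        obtain ⟨g, hdet, hgx, hgv⟩ := lemA hn x v y w hx hv hy hw hin
        refine ⟨g, hdet, ?_⟩
        rw [hW, hW', KA_map_span_pair, hgx, hgv]
      · have hin : (inner ℂ x v : ℂ) = inner ℂ y (-w) := by
          rw [inner_neg_right]
          apply Complex.ext
          · rw [Complex.neg_re, hxv, hyw, neg_zero]
          · rw [Complex.neg_im]
            exact heq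
        obtain ⟨g, hdet, hgx, hgv⟩ := lemA hn x v y (-w) hx hv hy
          (by rw [norm_neg]; exact hw) hin
        refine ⟨g, hdet, ?_⟩
        rw [hW, hW', KA_map_span_pair, hgx, hgv, KA_span_pair_neg]



end KaehlerAngleAux
end

section
/- Let F ⊂ Sym²(ℝⁿ) be a closed set that is a cone (tF = F for t ≥ 0), satisfies positivity (F + P ⊂ F where P = {A ≥ 0}), is O(n)-invariant, and has Riesz characteristic p, meaning p = sup{ t ≥ 1 : P_{e⊥} − (t−1)P_e ∈ F } for a (hence any) unit vector e, with p finite. Then F^{min/2}_p ⊂ F ⊂ F^{min/max}_p, where F^{min/2}_p = { A : λ_min(A) + (p−1)λ₂(A) ≥ 0 } and F^{min/max}_p = { A : λ_min(A) + (p−1)λ_max(A) ≥ 0 }, with λ₁(A) ≤ λ₂(A) ≤ … ≤ λₙ(A) the ordered eigenvalues. -/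
open Matrix

/-- The `i`-th smallest eigenvalue (with multiplicity) of a real symmetric
matrix. -/
noncomputable def sortedEigenvalues {n : ℕ} {A : Matrix (Fin n) (Fin n) ℝ}
    (hA : A.IsHermitian) : Fin n → ℝ :=
  fun i => hA.eigenvalues (Tuple.sort hA.eigenvalues i)

private lemma vecMulVec_ind {n : ℕ} [DecidableEq (Fin n)] (i₀ : Fin n) :
    Matrix.vecMulVec (fun i => if i = i₀ then (1:ℝ) else 0)
      (fun i => if i = i₀ then (1:ℝ) else 0)
      = Matrix.diagonal (fun i => if i = i₀ then (1:ℝ) else 0) := by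
  ext i j
  simp only [Matrix.vecMulVec_apply, Matrix.diagonal_apply]
  by_cases hij : i = j
  · subst hij
    by_cases hi : i = i₀ <;> simp [hi]
  · by_cases hi : i = i₀ <;> by_cases hj : j = i₀ <;> simp_all

private lemma mem_F_iff_diag {n : ℕ} (F : Set (Matrix (Fin n) (Fin n) ℝ))
    (hFinv : ∀ g : Matrix (Fin n) (Fin n) ℝ, g * gᵀ = 1 → ∀ A ∈ F, g * A * gᵀ ∈ F)
    {A : Matrix (Fin n) (Fin n) ℝ} (hA : A.IsHermitian) :
    A ∈ F ↔ Matrix.diagonal hA.eigenvalues ∈ F := by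
  set U := (Matrix.IsHermitian.eigenvectorUnitary hA : Matrix (Fin n) (Fin n) ℝ) with hUdef
  have hsU : star U = Uᵀ := by
    rw [Matrix.star_eq_conjTranspose, Matrix.conjTranspose_eq_transpose_of_trivial]
  have hU1 : U * Uᵀ = 1 := by
    have := (Matrix.mem_unitaryGroup_iff).mp (Matrix.IsHermitian.eigenvectorUnitary hA).2
    rwa [hsU] at this
  have hU2 : Uᵀ * U = 1 := by
    have := (Matrix.mem_unitaryGroup_iff').mp (Matrix.IsHermitian.eigenvectorUnitary hA).2
    rwa [hsU] at this
  have hdiag : Uᵀ * A * U = Matrix.diagonal hA.eigenvalues := by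
    have := Matrix.IsHermitian.conjStarAlgAut_star_eigenvectorUnitary hA
    rw [Unitary.conjStarAlgAut_star_apply, hsU] at this
    simpa using this
  constructor
  · intro hAF
    have := hFinv Uᵀ (by rw [Matrix.transpose_transpose]; exact hU2) A hAF
    rw [Matrix.transpose_transpose, hdiag] at this
    exact this
  · intro hD
    have := hFinv U hU1 _ hD
    rw [← hdiag] at this
    have hAeq : U * (Uᵀ * A * U) * Uᵀ = A := by
      rw [show U * (Uᵀ * A * U) * Uᵀ = (U * Uᵀ) * A * (U * Uᵀ) by
        simp only [Matrix.mul_assoc], hU1, Matrix.one_mul, Matrix.mul_one]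
    rwa [hAeq] at this
  
private lemma diag_lower {n : ℕ} (F : Set (Matrix (Fin n) (Fin n) ℝ))
    (hFcone : ∀ t : ℝ, 0 ≤ t → ∀ A ∈ F, t • A ∈ F)
    (hFpos : ∀ A ∈ F, ∀ P : Matrix (Fin n) (Fin n) ℝ, P.PosSemidef → A + P ∈ F)
    (p : ℝ) (hp : 1 ≤ p)
    (hchar : ∀ e : Fin n → ℝ, (∑ i, e i * e i) = 1 → ∀ t : ℝ, 1 ≤ t →
      (((1 : Matrix (Fin n) (Fin n) ℝ) - Matrix.vecMulVec e e)
          - (t - 1) • Matrix.vecMulVec e e ∈ F ↔ t ≤ p))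
    (μ : Fin n → ℝ) (i₀ : Fin n) (m2 : ℝ)
    (hmin : μ i₀ ≤ m2) (hm2 : ∀ i, i ≠ i₀ → m2 ≤ μ i)
    (h : 0 ≤ μ i₀ + (p - 1) * m2) :
    Matrix.diagonal μ ∈ F := by
  have hm2nn : 0 ≤ m2 := by nlinarith
  set e : Fin n → ℝ := fun i => if i = i₀ then (1:ℝ) else 0 with he
  have hunit : (∑ i, e i * e i) = 1 := by
    rw [he]
    rw [Finset.sum_eq_single i₀] <;> simp +contextual
  have hB : ((1 : Matrix (Fin n) (Fin n) ℝ) - Matrix.vecMulVec e e)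
      - (p - 1) • Matrix.vecMulVec e e ∈ F := (hchar e hunit p hp).mpr le_rfl
  rw [vecMulVec_ind] at hB
  set B : Matrix (Fin n) (Fin n) ℝ :=
    ((1 : Matrix (Fin n) (Fin n) ℝ)
        - Matrix.diagonal (fun i => if i = i₀ then (1:ℝ) else 0))
      - (p - 1) • Matrix.diagonal (fun i => if i = i₀ then (1:ℝ) else 0) with hBdef
  set d : Fin n → ℝ := fun i => if i = i₀ then μ i₀ + (p - 1) * m2 else μ i - m2 with hd
  have hdpos : (Matrix.diagonal d).PosSemidef := by
    rw [Matrix.posSemidef_diagonal_iff]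
    intro i
    rw [hd]
    by_cases hi : i = i₀
    · simpa [hi] using h
    · simp only [hi, if_false]
      have := hm2 i hi
      linarith
  have hkey : Matrix.diagonal μ = m2 • B + Matrix.diagonal d := by
    ext i j
    rw [hBdef, hd]
    by_cases hij : i = j
    · subst hij
      by_cases hi : i = i₀ <;>
        simp [Matrix.diagonal_apply, Matrix.one_apply, hi] <;> ring
    · simp [Matrix.diagonal_apply_ne _ hij, Matrix.one_apply_ne hij]
  rw [hkey]
  exact hFpos _ (hFcone m2 hm2nn B hB) _ hdpos

private lemma diag_upper {n : ℕ} (F : Set (Matrix (Fin n) (Fin n) ℝ))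
    (hFcone : ∀ t : ℝ, 0 ≤ t → ∀ A ∈ F, t • A ∈ F)
    (hFpos : ∀ A ∈ F, ∀ P : Matrix (Fin n) (Fin n) ℝ, P.PosSemidef → A + P ∈ F)
    (p : ℝ) (hp : 1 ≤ p)
    (hchar : ∀ e : Fin n → ℝ, (∑ i, e i * e i) = 1 → ∀ t : ℝ, 1 ≤ t →
      (((1 : Matrix (Fin n) (Fin n) ℝ) - Matrix.vecMulVec e e)
          - (t - 1) • Matrix.vecMulVec e e ∈ F ↔ t ≤ p))
    (μ : Fin n → ℝ) (i₀ : Fin n) (M : ℝ)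
    (hmax : ∀ i, μ i ≤ M)
    (hmem : Matrix.diagonal μ ∈ F) :
    0 ≤ μ i₀ + (p - 1) * M := by
  by_contra hcon
  push_neg at hcon
  have hp0 : (0:ℝ) < p := by linarith
  have hμ0 : μ i₀ < 0 := by nlinarith [hmax i₀]
  set s : ℝ := max M (-μ i₀ / p) with hs
  have hspos : 0 < s := lt_of_lt_of_le (div_pos (by linarith) hp0) (le_max_right _ _)
  set d : Fin n → ℝ := fun i => if i = i₀ then 0 else s - μ i with hd
  have hdpos : (Matrix.diagonal d).PosSemidef := by
    rw [Matrix.posSemidef_diagonal_iff]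
    intro i
    rw [hd]
    by_cases hi : i = i₀
    · simp [hi]
    · simp only [hi, if_false, sub_nonneg]
      exact le_trans (hmax i) (le_max_left _ _)
  have hC : Matrix.diagonal μ + Matrix.diagonal d ∈ F := hFpos _ hmem _ hdpos
  have hC' : s⁻¹ • (Matrix.diagonal μ + Matrix.diagonal d) ∈ F :=
    hFcone s⁻¹ (inv_nonneg.mpr hspos.le) _ hC
  set e : Fin n → ℝ := fun i => if i = i₀ then (1:ℝ) else 0 with he
  have hunit : (∑ i, e i * e i) = 1 := by
    rw [he]
    rw [Finset.sum_eq_single i₀] <;> simp +contextual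
  set t : ℝ := 1 - μ i₀ / s with ht
  have ht1 : 1 ≤ t := by
    rw [ht]
    have : μ i₀ / s < 0 := div_neg_of_neg_of_pos hμ0 hspos
    linarith
  have hkey : s⁻¹ • (Matrix.diagonal μ + Matrix.diagonal d)
      = ((1 : Matrix (Fin n) (Fin n) ℝ) - Matrix.vecMulVec e e)
          - (t - 1) • Matrix.vecMulVec e e := by
    rw [vecMulVec_ind]
    ext i j
    by_cases hij : i = j
    · subst hij
      by_cases hi : i = i₀
      · simp only [Matrix.smul_apply, Matrix.add_apply, Matrix.sub_apply,
          Matrix.diagonal_apply_eq, Matrix.one_apply_eq, hd, hi, if_pos rfl, ht, smul_eq_mul]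
        field_simp
        simp only [if_true]
        ring
      · simp only [Matrix.smul_apply, Matrix.add_apply, Matrix.sub_apply,
          Matrix.diagonal_apply_eq, Matrix.one_apply_eq, hd, hi, if_false, smul_eq_mul]
        field_simp
        ring
    · simp [Matrix.diagonal_apply_ne _ hij, Matrix.one_apply_ne hij]
  rw [hkey] at hC'
  have htp : t ≤ p := (hchar e hunit t ht1).mp hC'
  have h1 : -μ i₀ ≤ (p - 1) * s := by
    have : -μ i₀ / s ≤ p - 1 := by rw [ht] at htp; rw [neg_div]; linarith
    calc -μ i₀ = (-μ i₀ / s) * s := by field_simp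
    _ ≤ (p - 1) * s := mul_le_mul_of_nonneg_right this hspos.le
  have h2 : μ i₀ + (p - 1) * s < 0 := by
    rcases max_cases M (-μ i₀ / p) with ⟨hsM, _⟩ | ⟨hsM, _⟩
    · rw [hs, hsM]; exact hcon
    · rw [hs, hsM]
      have : μ i₀ + (p - 1) * (-μ i₀ / p) = μ i₀ / p := by field_simp; ring
      rw [this]
      exact div_neg_of_neg_of_pos hμ0 hp0
  linarith

/-- Every O(n)-invariant cone subequation `F` with finite Riesz characteristic
`p` is sandwiched between `F^{min/2}_p = {λ₁ + (p-1) λ₂ ≥ 0}` and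
`F^{min/max}_p = {λ₁ + (p-1) λₙ ≥ 0}`. -/
theorem cone_subequation_sandwich {n : ℕ} (hn : 2 ≤ n)
    (F : Set (Matrix (Fin n) (Fin n) ℝ))
    (hFsym : ∀ A ∈ F, A.IsHermitian)
    (hFclosed : IsClosed F)
    (hFcone : ∀ t : ℝ, 0 ≤ t → ∀ A ∈ F, t • A ∈ F)
    (hFpos : ∀ A ∈ F, ∀ P : Matrix (Fin n) (Fin n) ℝ, P.PosSemidef → A + P ∈ F)
    (hFinv : ∀ g : Matrix (Fin n) (Fin n) ℝ, g * gᵀ = 1 → ∀ A ∈ F, g * A * gᵀ ∈ F)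
    (p : ℝ) (hp : 1 ≤ p)
    (hchar : ∀ e : Fin n → ℝ, (∑ i, e i * e i) = 1 → ∀ t : ℝ, 1 ≤ t →
      (((1 : Matrix (Fin n) (Fin n) ℝ) - Matrix.vecMulVec e e)
          - (t - 1) • Matrix.vecMulVec e e ∈ F ↔ t ≤ p)) :
    (∀ (A : Matrix (Fin n) (Fin n) ℝ) (hA : A.IsHermitian),
        0 ≤ sortedEigenvalues hA ⟨0, by omega⟩ +
              (p - 1) * sortedEigenvalues hA ⟨1, by omega⟩ → A ∈ F) ∧
    (∀ (A : Matrix (Fin n) (Fin n) ℝ) (hA : A.IsHermitian), A ∈ F →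
        0 ≤ sortedEigenvalues hA ⟨0, by omega⟩ +
              (p - 1) * sortedEigenvalues hA ⟨n - 1, by omega⟩) := by
  constructor
  · intro A hA h
    set μ := hA.eigenvalues with hμ
    set σ := Tuple.sort μ with hσ
    have mono : Monotone (μ ∘ σ) := Tuple.monotone_sort μ
    rw [mem_F_iff_diag F hFinv hA]
    refine diag_lower F hFcone hFpos p hp hchar μ (σ ⟨0, by omega⟩)
      (μ (σ ⟨1, by omega⟩)) ?_ ?_ ?_
    · exact mono (by simp [Fin.le_def])
    · intro i hi
      have h1 : (⟨1, by omega⟩ : Fin n) ≤ σ.symm i := by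
        rw [Fin.le_def]
        rcases Nat.lt_or_ge ((σ.symm i : Fin n) : ℕ) 1 with hc | hc
        · exfalso
          apply hi
          have h0 : σ.symm i = (⟨0, by omega⟩ : Fin n) :=
            Fin.ext (show ((σ.symm i : Fin n) : ℕ) = 0 by omega)
          rw [← σ.apply_symm_apply i, h0]
        · exact hc
      simpa [σ.apply_symm_apply] using mono h1
    · exact h
  · intro A hA hAF
    set μ := hA.eigenvalues with hμ
    set σ := Tuple.sort μ with hσ
    have mono : Monotone (μ ∘ σ) := Tuple.monotone_sort μ
    rw [mem_F_iff_diag F hFinv hA] at hAF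
    refine diag_upper F hFcone hFpos p hp hchar μ (σ ⟨0, by omega⟩)
      (μ (σ ⟨n - 1, by omega⟩)) ?_ hAF
    intro i
    have h1 : σ.symm i ≤ (⟨n - 1, by omega⟩ : Fin n) := by
      rw [Fin.le_def]
      have h2 : ((⟨n - 1, by omega⟩ : Fin n) : ℕ) = n - 1 := rfl
      have := (σ.symm i).isLt
      omega
    simpa [σ.apply_symm_apply] using mono h1
end

section
/- For 1 ≤ p < ∞, the dual of the subequation F^{min/max}_p = { A ∈ Sym²(ℝⁿ) : λ_min(A) + (p−1)λ_max(A) ≥ 0 } is F^{min/max}_q where (p−1)(q−1) = 1; here the dual of F is F̃ = { A : −A ∉ Int F } = −(∁ Int F). -/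
open Matrix

namespace DualAux

variable {n : ℕ}

noncomputable def lmin {A : Matrix (Fin n) (Fin n) ℝ} (hA : A.IsHermitian) : ℝ :=
  ⨅ i, hA.eigenvalues i

noncomputable def lmax {A : Matrix (Fin n) (Fin n) ℝ} (hA : A.IsHermitian) : ℝ :=
  ⨆ i, hA.eigenvalues i

noncomputable def coeffs {A : Matrix (Fin n) (Fin n) ℝ} (hA : A.IsHermitian)
    (x : Fin n → ℝ) (j : Fin n) : ℝ := ⇑(hA.eigenvectorBasis j) ⬝ᵥ x

lemma sum_decomp {A : Matrix (Fin n) (Fin n) ℝ} (hA : A.IsHermitian)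
    (x : Fin n → ℝ) : x = ∑ j, coeffs hA x j • ⇑(hA.eigenvectorBasis j) := by
  have h := hA.eigenvectorBasis.sum_repr' ((WithLp.equiv 2 (Fin n → ℝ)).symm x)
  have h2 := congrArg (WithLp.linearEquiv 2 ℝ (Fin n → ℝ)) h
  rw [map_sum] at h2
  simp only [_root_.map_smul, WithLp.linearEquiv_apply, Equiv.apply_symm_apply] at h2
  have h3 : ∀ j, (inner ℝ (hA.eigenvectorBasis j) ((WithLp.equiv 2 (Fin n → ℝ)).symm x) : ℝ)
      = coeffs hA x j := by
    intro j
    rw [coeffs, EuclideanSpace.inner_eq_star_dotProduct]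
    simp [dotProduct_comm]
  calc x = ∑ j, (inner ℝ (hA.eigenvectorBasis j) ((WithLp.equiv 2 (Fin n → ℝ)).symm x) : ℝ)
        • (WithLp.equiv 2 (Fin n → ℝ)) (hA.eigenvectorBasis j) := h2.symm
    _ = ∑ j, coeffs hA x j • ⇑(hA.eigenvectorBasis j) :=
        Finset.sum_congr rfl fun j _ => by rw [h3 j]; rfl

lemma dot_basis {A : Matrix (Fin n) (Fin n) ℝ} (hA : A.IsHermitian)
    (x : Fin n → ℝ) (j : Fin n) : x ⬝ᵥ ⇑(hA.eigenvectorBasis j) = coeffs hA x j := by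
  rw [coeffs, dotProduct_comm]

/-- the quadratic-form linear functional `y ↦ x ⬝ᵥ (A *ᵥ y)` -/
noncomputable def quadL (A : Matrix (Fin n) (Fin n) ℝ) (x : Fin n → ℝ) :
    (Fin n → ℝ) →ₗ[ℝ] ℝ where
  toFun y := x ⬝ᵥ (A *ᵥ y)
  map_add' y z := by rw [mulVec_add, dotProduct_add]
  map_smul' c y := by rw [mulVec_smul, dotProduct_smul]; rfl

/-- the linear functional `y ↦ x ⬝ᵥ y` -/
noncomputable def dotL (x : Fin n → ℝ) : (Fin n → ℝ) →ₗ[ℝ] ℝ where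
  toFun y := x ⬝ᵥ y
  map_add' y z := by rw [dotProduct_add]
  map_smul' c y := by rw [dotProduct_smul]; rfl

lemma dot_self_eq {A : Matrix (Fin n) (Fin n) ℝ} (hA : A.IsHermitian)
    (x : Fin n → ℝ) : x ⬝ᵥ x = ∑ j, (coeffs hA x j) ^ 2 := by
  have h := congrArg (dotL x) (sum_decomp hA x)
  rw [map_sum] at h
  simp only [_root_.map_smul, smul_eq_mul] at h
  calc x ⬝ᵥ x = dotL x x := rfl
    _ = ∑ j, coeffs hA x j * dotL x ⇑(hA.eigenvectorBasis j) := h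
    _ = ∑ j, coeffs hA x j ^ 2 := by
        refine Finset.sum_congr rfl fun j _ => ?_
        rw [show dotL x ⇑(hA.eigenvectorBasis j) = coeffs hA x j from dot_basis hA x j]
        ring

lemma quad_eq {A : Matrix (Fin n) (Fin n) ℝ} (hA : A.IsHermitian)
    (x : Fin n → ℝ) :
    x ⬝ᵥ (A *ᵥ x) = ∑ j, hA.eigenvalues j * (coeffs hA x j) ^ 2 := by
  have h := congrArg (quadL A x) (sum_decomp hA x)
  rw [map_sum] at h
  simp only [_root_.map_smul, smul_eq_mul] at h
  calc x ⬝ᵥ (A *ᵥ x) = quadL A x x := rfl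
    _ = ∑ j, coeffs hA x j * quadL A x ⇑(hA.eigenvectorBasis j) := h
    _ = ∑ j, hA.eigenvalues j * coeffs hA x j ^ 2 := by
        refine Finset.sum_congr rfl fun j _ => ?_
        have e : quadL A x ⇑(hA.eigenvectorBasis j) = hA.eigenvalues j * coeffs hA x j := by
          show x ⬝ᵥ (A *ᵥ ⇑(hA.eigenvectorBasis j)) = _
          rw [hA.mulVec_eigenvectorBasis, dotProduct_smul, smul_eq_mul, dot_basis]
        rw [e]
        ring

lemma lmin_le_quad (hn : 1 ≤ n) {A : Matrix (Fin n) (Fin n) ℝ} (hA : A.IsHermitian)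
    (x : Fin n → ℝ) (hx : x ⬝ᵥ x = 1) : lmin hA ≤ x ⬝ᵥ (A *ᵥ x) := by
  rw [quad_eq hA x]
  have h1 : lmin hA = ∑ j, lmin hA * (coeffs hA x j) ^ 2 := by
    rw [← Finset.mul_sum, ← dot_self_eq hA x, hx, mul_one]
  rw [h1]
  refine Finset.sum_le_sum fun j _ => ?_
  exact mul_le_mul_of_nonneg_right (ciInf_le (Set.finite_range _).bddBelow j) (sq_nonneg _)

lemma quad_le_lmax (hn : 1 ≤ n) {A : Matrix (Fin n) (Fin n) ℝ} (hA : A.IsHermitian)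
    (x : Fin n → ℝ) (hx : x ⬝ᵥ x = 1) : x ⬝ᵥ (A *ᵥ x) ≤ lmax hA := by
  rw [quad_eq hA x]
  have h1 : lmax hA = ∑ j, lmax hA * (coeffs hA x j) ^ 2 := by
    rw [← Finset.mul_sum, ← dot_self_eq hA x, hx, mul_one]
  rw [h1]
  refine Finset.sum_le_sum fun j _ => ?_
  exact mul_le_mul_of_nonneg_right (le_ciSup (Set.finite_range _).bddAbove j) (sq_nonneg _)

lemma dot_self_basis {A : Matrix (Fin n) (Fin n) ℝ} (hA : A.IsHermitian) (i : Fin n) :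
    ⇑(hA.eigenvectorBasis i) ⬝ᵥ ⇑(hA.eigenvectorBasis i) = 1 := by
  have h := real_inner_self_eq_norm_sq (hA.eigenvectorBasis i)
  rw [EuclideanSpace.inner_eq_star_dotProduct] at h
  rw [show star ((hA.eigenvectorBasis i).ofLp)
      = (hA.eigenvectorBasis i).ofLp from star_trivial _] at h
  rw [h, hA.eigenvectorBasis.orthonormal.1 i, one_pow]

lemma exists_min (hn : 1 ≤ n) {A : Matrix (Fin n) (Fin n) ℝ} (hA : A.IsHermitian) :
    ∃ x : Fin n → ℝ, x ⬝ᵥ x = 1 ∧ x ⬝ᵥ (A *ᵥ x) = lmin hA := by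
  haveI : Nonempty (Fin n) := ⟨⟨0, hn⟩⟩
  obtain ⟨i, hi⟩ := exists_eq_ciInf_of_finite (f := hA.eigenvalues)
  refine ⟨⇑(hA.eigenvectorBasis i), dot_self_basis hA i, ?_⟩
  rw [hA.mulVec_eigenvectorBasis, dotProduct_smul, smul_eq_mul, dot_self_basis hA i,
    mul_one, hi]
  rfl

lemma exists_max (hn : 1 ≤ n) {A : Matrix (Fin n) (Fin n) ℝ} (hA : A.IsHermitian) :
    ∃ x : Fin n → ℝ, x ⬝ᵥ x = 1 ∧ x ⬝ᵥ (A *ᵥ x) = lmax hA := by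
  haveI : Nonempty (Fin n) := ⟨⟨0, hn⟩⟩
  obtain ⟨i, hi⟩ := exists_eq_ciSup_of_finite (f := hA.eigenvalues)
  refine ⟨⇑(hA.eigenvectorBasis i), dot_self_basis hA i, ?_⟩
  rw [hA.mulVec_eigenvectorBasis, dotProduct_smul, smul_eq_mul, dot_self_basis hA i,
    mul_one, hi]
  rfl

lemma lmin_unique (hn : 1 ≤ n) {A : Matrix (Fin n) (Fin n) ℝ} (hA : A.IsHermitian)
    (r : ℝ) (h1 : ∃ x : Fin n → ℝ, x ⬝ᵥ x = 1 ∧ x ⬝ᵥ (A *ᵥ x) = r)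
    (h2 : ∀ x : Fin n → ℝ, x ⬝ᵥ x = 1 → r ≤ x ⬝ᵥ (A *ᵥ x)) : lmin hA = r := by
  obtain ⟨x, hx1, hx2⟩ := exists_min hn hA
  obtain ⟨y, hy1, hy2⟩ := h1
  refine le_antisymm ?_ ?_
  · rw [← hy2]; exact lmin_le_quad hn hA y hy1
  · rw [← hx2]; exact h2 x hx1

lemma lmax_unique (hn : 1 ≤ n) {A : Matrix (Fin n) (Fin n) ℝ} (hA : A.IsHermitian)
    (r : ℝ) (h1 : ∃ x : Fin n → ℝ, x ⬝ᵥ x = 1 ∧ x ⬝ᵥ (A *ᵥ x) = r)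
    (h2 : ∀ x : Fin n → ℝ, x ⬝ᵥ x = 1 → x ⬝ᵥ (A *ᵥ x) ≤ r) : lmax hA = r := by
  obtain ⟨x, hx1, hx2⟩ := exists_max hn hA
  obtain ⟨y, hy1, hy2⟩ := h1
  refine le_antisymm ?_ ?_
  · rw [← hx2]; exact h2 x hx1
  · rw [← hy2]; exact quad_le_lmax hn hA y hy1

lemma lmin_neg (hn : 1 ≤ n) {A : Matrix (Fin n) (Fin n) ℝ} (hA : A.IsHermitian) :
    lmin hA.neg = -lmax hA := by
  refine lmin_unique hn hA.neg _ ?_ ?_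
  · obtain ⟨x, hx1, hx2⟩ := exists_max hn hA
    exact ⟨x, hx1, by rw [neg_mulVec, dotProduct_neg, hx2]⟩
  · intro x hx
    rw [neg_mulVec, dotProduct_neg, neg_le_neg_iff]
    exact quad_le_lmax hn hA x hx

lemma lmax_neg (hn : 1 ≤ n) {A : Matrix (Fin n) (Fin n) ℝ} (hA : A.IsHermitian) :
    lmax hA.neg = -lmin hA := by
  refine lmax_unique hn hA.neg _ ?_ ?_
  · obtain ⟨x, hx1, hx2⟩ := exists_min hn hA
    exact ⟨x, hx1, by rw [neg_mulVec, dotProduct_neg, hx2]⟩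
  · intro x hx
    rw [neg_mulVec, dotProduct_neg, neg_le_neg_iff]
    exact lmin_le_quad hn hA x hx

lemma shift_quad {A : Matrix (Fin n) (Fin n) ℝ} (t : ℝ) (x : Fin n → ℝ)
    (hx : x ⬝ᵥ x = 1) :
    x ⬝ᵥ ((A - t • (1 : Matrix (Fin n) (Fin n) ℝ)) *ᵥ x) = x ⬝ᵥ (A *ᵥ x) - t := by
  rw [sub_mulVec, dotProduct_sub, smul_mulVec, one_mulVec, dotProduct_smul,
    smul_eq_mul, hx, mul_one]

lemma lmin_shift (hn : 1 ≤ n) {A : Matrix (Fin n) (Fin n) ℝ} (hA : A.IsHermitian)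
    (t : ℝ) (hB : (A - t • 1).IsHermitian) : lmin hB = lmin hA - t := by
  refine lmin_unique hn hB _ ?_ ?_
  · obtain ⟨x, hx1, hx2⟩ := exists_min hn hA
    exact ⟨x, hx1, by rw [shift_quad t x hx1, hx2]⟩
  · intro x hx
    rw [shift_quad t x hx]
    have := lmin_le_quad hn hA x hx
    linarith

lemma lmax_shift (hn : 1 ≤ n) {A : Matrix (Fin n) (Fin n) ℝ} (hA : A.IsHermitian)
    (t : ℝ) (hB : (A - t • 1).IsHermitian) : lmax hB = lmax hA - t := by
  refine lmax_unique hn hB _ ?_ ?_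
  · obtain ⟨x, hx1, hx2⟩ := exists_max hn hA
    exact ⟨x, hx1, by rw [shift_quad t x hx1, hx2]⟩
  · intro x hx
    rw [shift_quad t x hx]
    have := quad_le_lmax hn hA x hx
    linarith

lemma quad_abs_le {E : Matrix (Fin n) (Fin n) ℝ} (x : Fin n → ℝ) (hx : x ⬝ᵥ x = 1) :
    |x ⬝ᵥ (E *ᵥ x)| ≤ ∑ i, ∑ j, |E i j| := by
  have habs : ∀ i, |x i| ≤ 1 := by
    intro i
    rw [abs_le_one_iff_mul_self_le_one]
    rw [dotProduct] at hx
    calc x i * x i ≤ ∑ k, x k * x k :=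
          Finset.single_le_sum (fun k _ => mul_self_nonneg (x k)) (Finset.mem_univ i)
      _ = 1 := hx
  rw [dotProduct]
  calc |∑ i, x i * (E *ᵥ x) i| ≤ ∑ i, |x i * (E *ᵥ x) i| :=
        Finset.abs_sum_le_sum_abs _ _
    _ ≤ ∑ i, ∑ j, |E i j| := by
        refine Finset.sum_le_sum fun i _ => ?_
        rw [abs_mul]
        calc |x i| * |(E *ᵥ x) i| ≤ 1 * |(E *ᵥ x) i| :=
              mul_le_mul_of_nonneg_right (habs i) (abs_nonneg _)
          _ = |∑ j, E i j * x j| := by rw [one_mul, mulVec, dotProduct]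
          _ ≤ ∑ j, |E i j * x j| := Finset.abs_sum_le_sum_abs _ _
          _ ≤ ∑ j, |E i j| := by
              refine Finset.sum_le_sum fun j _ => ?_
              rw [abs_mul]
              calc |E i j| * |x j| ≤ |E i j| * 1 :=
                    mul_le_mul_of_nonneg_left (habs j) (abs_nonneg _)
                _ = |E i j| := mul_one _
    
lemma quad_split (A B : Matrix (Fin n) (Fin n) ℝ) (x : Fin n → ℝ) :
    x ⬝ᵥ (B *ᵥ x) = x ⬝ᵥ (A *ᵥ x) + x ⬝ᵥ ((B - A) *ᵥ x) := by
  rw [sub_mulVec, dotProduct_sub]; ring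

lemma lmin_perturb (hn : 1 ≤ n) {A B : Matrix (Fin n) (Fin n) ℝ}
    (hA : A.IsHermitian) (hB : B.IsHermitian) :
    lmin hA - ∑ i, ∑ j, |B i j - A i j| ≤ lmin hB := by
  obtain ⟨x, hx1, hx2⟩ := exists_min hn hB
  have h1 := lmin_le_quad hn hA x hx1
  have h2 := quad_abs_le (E := B - A) x hx1
  have h3 := quad_split A B x
  have h4 : ∑ i, ∑ j, |(B - A) i j| = ∑ i, ∑ j, |B i j - A i j| := by
    simp [Matrix.sub_apply]
  rw [h4] at h2
  have h5 := neg_abs_le (x ⬝ᵥ ((B - A) *ᵥ x))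
  linarith [hx2 ▸ h3]

lemma lmax_perturb (hn : 1 ≤ n) {A B : Matrix (Fin n) (Fin n) ℝ}
    (hA : A.IsHermitian) (hB : B.IsHermitian) :
    lmax hA - ∑ i, ∑ j, |B i j - A i j| ≤ lmax hB := by
  obtain ⟨x, hx1, hx2⟩ := exists_max hn hA
  have h1 := quad_le_lmax hn hB x hx1
  have h2 := quad_abs_le (E := B - A) x hx1
  have h3 := quad_split A B x
  have h4 : ∑ i, ∑ j, |(B - A) i j| = ∑ i, ∑ j, |B i j - A i j| := by
    simp [Matrix.sub_apply]
  rw [h4] at h2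
  have h5 := neg_abs_le (x ⬝ᵥ ((B - A) *ᵥ x))
  linarith

end DualAux

open DualAux

/-- The space `Sym²(ℝⁿ)` of real symmetric `n × n` matrices. -/
abbrev SymMat (n : ℕ) := {A : Matrix (Fin n) (Fin n) ℝ // A.IsHermitian}

/-- The subequation `F^{min/max}_p = {A : λ_min(A) + (p-1) λ_max(A) ≥ 0}`. -/
noncomputable def Fminmax (n : ℕ) (p : ℝ) : Set (SymMat n) :=
  {A : SymMat n |
    0 ≤ (⨅ i, A.2.eigenvalues i) + (p - 1) * (⨆ i, A.2.eigenvalues i)}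

lemma mem_Fminmax_iff {n : ℕ} (p : ℝ) (A : SymMat n) :
    A ∈ Fminmax n p ↔ 0 ≤ lmin A.2 + (p - 1) * lmax A.2 := Iff.rfl

lemma interior_Fminmax {n : ℕ} (hn : 1 ≤ n) (p : ℝ) (hp : 1 < p) :
    interior (Fminmax n p) = {A : SymMat n | 0 < lmin A.2 + (p - 1) * lmax A.2} := by
  have hp1 : (0 : ℝ) < p - 1 := by linarith
  ext A
  simp only [Set.mem_setOf_eq]
  constructor
  · -- interior ⊆ strict positivity
    intro hAint
    have hherm : ∀ t : ℝ, (A.1 - t • (1 : Matrix (Fin n) (Fin n) ℝ)).IsHermitian := by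
      intro t
      refine A.2.sub ?_
      simp [Matrix.IsHermitian, Matrix.conjTranspose_smul]
    set φ : ℝ → SymMat n := fun t => ⟨A.1 - t • 1, hherm t⟩ with hφ
    have hφc : Continuous φ := by
      refine Continuous.subtype_mk ?_ _
      refine continuous_pi fun i => continuous_pi fun j => ?_
      have : (fun t : ℝ => (A.1 - t • (1 : Matrix (Fin n) (Fin n) ℝ)) i j)
          = fun t : ℝ => A.1 i j - t * (1 : Matrix (Fin n) (Fin n) ℝ) i j := by
        funext t; simp [Matrix.sub_apply, Matrix.smul_apply, smul_eq_mul]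
      rw [this]
      exact continuous_const.sub (continuous_id.mul continuous_const)
    have hφ0 : φ 0 = A := by
      apply Subtype.ext; simp [hφ]
    have hnhds : φ ⁻¹' (interior (Fminmax n p)) ∈ nhds (0 : ℝ) := by
      apply hφc.continuousAt.preimage_mem_nhds
      rw [hφ0]
      exact isOpen_interior.mem_nhds hAint
    obtain ⟨ε, hε, hball⟩ := Metric.mem_nhds_iff.1 hnhds
    have ht : (ε / 2) ∈ Metric.ball (0 : ℝ) ε := by
      rw [Metric.mem_ball, Real.dist_eq, sub_zero, abs_of_pos (half_pos hε)]
      linarith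
    have hmem : φ (ε / 2) ∈ Fminmax n p := interior_subset (hball ht)
    rw [mem_Fminmax_iff] at hmem
    have e1 : lmin (φ (ε / 2)).2 = lmin A.2 - ε / 2 := lmin_shift hn A.2 _ _
    have e2 : lmax (φ (ε / 2)).2 = lmax A.2 - ε / 2 := lmax_shift hn A.2 _ _
    rw [e1, e2] at hmem
    nlinarith [half_pos hε, mul_pos hp1 (half_pos hε)]
  · -- strict positivity ⊆ interior
    intro hpos
    set g := lmin A.2 + (p - 1) * lmax A.2 with hg
    set U : Set (SymMat n) :=
      {B : SymMat n | ∑ i, ∑ j, |B.1 i j - A.1 i j| < g / p} with hU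
    have hfc : Continuous fun B : SymMat n => ∑ i, ∑ j, |B.1 i j - A.1 i j| := by
      refine continuous_finset_sum _ fun i _ => continuous_finset_sum _ fun j _ => ?_
      exact ((continuous_subtype_val.matrix_elem i j).sub continuous_const).abs
    have hUopen : IsOpen U := by
      have : U = (fun B : SymMat n => ∑ i, ∑ j, |B.1 i j - A.1 i j|) ⁻¹' Set.Iio (g / p) := rfl
      rw [this]
      exact isOpen_Iio.preimage hfc
    have hAU : A ∈ U := by
      have : ∑ i, ∑ j, |A.1 i j - A.1 i j| = 0 := by simp
      simp only [hU, Set.mem_setOf_eq, this]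
      positivity
    have hsub : U ⊆ Fminmax n p := by
      intro B hB
      rw [mem_Fminmax_iff]
      have hd : ∑ i, ∑ j, |B.1 i j - A.1 i j| < g / p := hB
      have d1 := lmin_perturb hn A.2 B.2
      have d2 := lmax_perturb hn A.2 B.2
      have hgd : p * (∑ i, ∑ j, |B.1 i j - A.1 i j|) < g := by
        rw [← lt_div_iff₀' (by linarith : (0:ℝ) < p)]
        exact hd
      nlinarith [mul_le_mul_of_nonneg_left d2 hp1.le]
    exact mem_interior_iff_mem_nhds.2 (Filter.mem_of_superset (hUopen.mem_nhds hAU) hsub)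

/-- The dual of `F^{min/max}_p` is `F^{min/max}_q` where `(p-1)(q-1) = 1`;
the dual of `F` is `F̃ = {A : -A ∉ Int F}`. -/
theorem dual_of_Fminmax {n : ℕ} (hn : 1 ≤ n) (p q : ℝ) (hp : 1 < p)
    (hq : (p - 1) * (q - 1) = 1) :
    {A : SymMat n | (⟨-A.1, A.2.neg⟩ : SymMat n) ∉ interior (Fminmax n p)} =
      Fminmax n q := by
  have hp1 : (0 : ℝ) < p - 1 := by linarith
  ext A
  simp only [Set.mem_setOf_eq, interior_Fminmax hn p hp]
  rw [mem_Fminmax_iff, not_lt]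
  have h1 : lmin ((⟨-A.1, A.2.neg⟩ : SymMat n)).2 = -lmax A.2 := lmin_neg hn A.2
  have h2 : lmax ((⟨-A.1, A.2.neg⟩ : SymMat n)).2 = -lmin A.2 := lmax_neg hn A.2
  rw [h1, h2]
  set a := lmin A.2
  set b := lmax A.2
  have key : (p - 1) * (a + (q - 1) * b) = (p - 1) * a + b := by
    have h3 : (p - 1) * ((q - 1) * b) = ((p - 1) * (q - 1)) * b := by ring
    rw [mul_add, h3, hq, one_mul]
  constructor
  · intro h
    by_contra hc
    push_neg at hc
    have := mul_neg_of_pos_of_neg hp1 hc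
    rw [key] at this
    linarith
  · intro h
    have := mul_nonneg hp1.le h
    rw [key] at this
    linarith
end

section
/- Let F ⊂ Sym²(ℝⁿ) be a cone subequation with Riesz characteristic p (i.e. P_{e⊥} − (t−1)P_e ∈ F iff t ≤ p, for unit vectors e). For δ ≥ 0 set r = 1 + δ and F(δ) = Φ_r(F) where Φ_r(A) = rA + (1−r)(tr A)(1/n)I. Then F(δ) has Riesz characteristic p_{F(δ)} = n(1+δ)p / (n + δp). Concretely: Φ_r(P_{e⊥} − (p−1)P_e) is a positive multiple of P_{e⊥} − (p′−1)P_e with p′ = n(1+δ)p/(n+δp). -/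
open Matrix

/-- The map `Φ_r(A) = r A + (1-r) (tr A) (1/n) I` on `n × n` matrices. -/
noncomputable def PhiHomothety (n : ℕ) (r : ℝ) (A : Matrix (Fin n) (Fin n) ℝ) :
    Matrix (Fin n) (Fin n) ℝ :=
  r • A + ((1 - r) * (A.trace / (n : ℝ))) • (1 : Matrix (Fin n) (Fin n) ℝ)

section Aux
variable {n : ℕ}

lemma aux_trace_vecMulVec (e : Fin n → ℝ) :
    (Matrix.vecMulVec e e).trace = ∑ i, e i * e i := by
  simp [Matrix.trace, Matrix.diag, Matrix.vecMulVec_apply]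

lemma aux_isHermitian (a b : ℝ) (e : Fin n → ℝ) :
    (a • (1 : Matrix (Fin n) (Fin n) ℝ) + b • Matrix.vecMulVec e e).IsHermitian := by
  unfold Matrix.IsHermitian
  ext i j
  rcases eq_or_ne i j with h | h
  · subst h; simp
  · simp [Matrix.conjTranspose_apply, Matrix.add_apply, Matrix.smul_apply,
      Matrix.one_apply, Matrix.vecMulVec_apply, h, Ne.symm h, mul_comm]

lemma aux_mulVec (e x : Fin n → ℝ) :
    Matrix.vecMulVec e e *ᵥ x = fun i => e i * (∑ j, e j * x j) := by
  ext i
  simp [Matrix.mulVec, dotProduct, Matrix.vecMulVec_apply, Finset.mul_sum, mul_assoc]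

lemma aux_posSemidef (a b : ℝ) (e : Fin n → ℝ) (he : (∑ i, e i * e i) = 1)
    (ha : 0 ≤ a) (hab : 0 ≤ a + b) :
    (a • (1 : Matrix (Fin n) (Fin n) ℝ) + b • Matrix.vecMulVec e e).PosSemidef := by
  refine Matrix.PosSemidef.of_dotProduct_mulVec_nonneg (aux_isHermitian a b e) fun x => ?_
  have hx : star x = x := by simp
  have key : ∑ i, x i * (e i * (∑ j, e j * x j)) = (∑ i, e i * x i) ^ 2 := by
    rw [pow_two, Finset.sum_mul]
    exact Finset.sum_congr rfl fun i _ => by ring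
  have h1 : dotProduct (star x)
      ((a • (1 : Matrix (Fin n) (Fin n) ℝ) + b • Matrix.vecMulVec e e) *ᵥ x)
      = a * (∑ i, x i * x i) + b * (∑ i, e i * x i) ^ 2 := by
    rw [hx, Matrix.add_mulVec, Matrix.smul_mulVec, Matrix.smul_mulVec,
      Matrix.one_mulVec, dotProduct_add, dotProduct_smul,
      dotProduct_smul, aux_mulVec]
    simp only [smul_eq_mul, dotProduct]
    rw [key]
  rw [h1]
  have hxx : 0 ≤ ∑ i, x i * x i := Finset.sum_nonneg fun i _ => mul_self_nonneg _
  have hcs : (∑ i, e i * x i) ^ 2 ≤ ∑ i, x i * x i := by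
    calc (∑ i, e i * x i) ^ 2 ≤ (∑ i, e i ^ 2) * ∑ i, x i ^ 2 :=
          Finset.sum_mul_sq_le_sq_mul_sq _ e x
      _ = ∑ i, x i * x i := by simp_rw [pow_two]; rw [he, one_mul]
  nlinarith [sq_nonneg (∑ i, e i * x i)]

end Aux

lemma aux_phi {n : ℕ} (hn : 0 < n) (r a b : ℝ) (e : Fin n → ℝ) (he : (∑ i, e i * e i) = 1) :
    PhiHomothety n r (a • (1 : Matrix (Fin n) (Fin n) ℝ) + b • Matrix.vecMulVec e e)
      = (r * a + (1 - r) * (a * n + b) / n) • (1 : Matrix (Fin n) (Fin n) ℝ)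
        + (r * b) • Matrix.vecMulVec e e := by
  have hn' : (n : ℝ) ≠ 0 := Nat.cast_ne_zero.2 hn.ne'
  have htr : (a • (1 : Matrix (Fin n) (Fin n) ℝ) + b • Matrix.vecMulVec e e).trace
      = a * n + b := by
    simp [Matrix.trace_add, Matrix.trace_smul, Matrix.trace_one, aux_trace_vecMulVec, dotProduct, he,
      smul_eq_mul, mul_comm]
  unfold PhiHomothety
  rw [htr]
  match_scalars <;> field_simp <;> ring

lemma aux_phi_inv {n : ℕ} (hn : 0 < n) (r : ℝ) (hr : r ≠ 0) (A : Matrix (Fin n) (Fin n) ℝ) :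
    PhiHomothety n (1/r) (PhiHomothety n r A) = A := by
  have hn' : (n : ℝ) ≠ 0 := Nat.cast_ne_zero.2 hn.ne'
  have htr : (r • A + ((1 - r) * (A.trace / (n : ℝ))) • (1 : Matrix (Fin n) (Fin n) ℝ)).trace
      = A.trace := by
    simp only [Matrix.trace_add, Matrix.trace_smul, Matrix.trace_one, smul_eq_mul,
      Fintype.card_fin]
    field_simp
    ring
  unfold PhiHomothety
  rw [htr]
  match_scalars <;> field_simp <;> ring

section Mem
variable {n : ℕ} {F : Set (Matrix (Fin n) (Fin n) ℝ)} {p : ℝ}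

lemma aux_char' (hp : 1 ≤ p)
    (hchar : ∀ e : Fin n → ℝ, (∑ i, e i * e i) = 1 → ∀ t : ℝ, 1 ≤ t →
      (((1 : Matrix (Fin n) (Fin n) ℝ) - Matrix.vecMulVec e e)
          - (t - 1) • Matrix.vecMulVec e e ∈ F ↔ t ≤ p))
    (e : Fin n → ℝ) (he : (∑ i, e i * e i) = 1) (t : ℝ) (ht : 1 ≤ t) :
    ((1:ℝ) • (1 : Matrix (Fin n) (Fin n) ℝ) + (-t) • Matrix.vecMulVec e e ∈ F ↔ t ≤ p) := by
  have h := hchar e he t ht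
  rw [show ((1 : Matrix (Fin n) (Fin n) ℝ) - Matrix.vecMulVec e e)
      - (t - 1) • Matrix.vecMulVec e e
      = (1:ℝ) • (1 : Matrix (Fin n) (Fin n) ℝ) + (-t) • Matrix.vecMulVec e e from by module] at h
  exact h

lemma aux_mem (hp : 1 ≤ p)
    (hFcone : ∀ t : ℝ, 0 ≤ t → ∀ A ∈ F, t • A ∈ F)
    (hFpos : ∀ A ∈ F, ∀ P : Matrix (Fin n) (Fin n) ℝ, P.PosSemidef → A + P ∈ F)
    (hchar : ∀ e : Fin n → ℝ, (∑ i, e i * e i) = 1 → ∀ t : ℝ, 1 ≤ t →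
      (((1 : Matrix (Fin n) (Fin n) ℝ) - Matrix.vecMulVec e e)
          - (t - 1) • Matrix.vecMulVec e e ∈ F ↔ t ≤ p))
    (e : Fin n → ℝ) (he : (∑ i, e i * e i) = 1) (a b : ℝ) (ha : 0 < a) :
    (a • (1 : Matrix (Fin n) (Fin n) ℝ) + b • Matrix.vecMulVec e e ∈ F ↔ -b ≤ a * p) := by
  rcases le_or_gt (-b) a with hba | hba
  · -- membership always holds and the inequality always holds
    have hineq : -b ≤ a * p := by nlinarith
    have h1 : (1:ℝ) • (1 : Matrix (Fin n) (Fin n) ℝ) + (-1 : ℝ) • Matrix.vecMulVec e e ∈ F :=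
      (aux_char' hp hchar e he 1 le_rfl).2 hp
    have h2 := hFcone a ha.le _ h1
    have hPSD : ((a+b) • Matrix.vecMulVec e e).PosSemidef := by
      have := aux_posSemidef 0 (a+b) e he le_rfl (by linarith)
      rwa [zero_smul, zero_add] at this
    have h3 := hFpos _ h2 _ hPSD
    rw [show a • ((1:ℝ) • (1 : Matrix (Fin n) (Fin n) ℝ) + (-1 : ℝ) • Matrix.vecMulVec e e)
        + (a+b) • Matrix.vecMulVec e e
        = a • (1 : Matrix (Fin n) (Fin n) ℝ) + b • Matrix.vecMulVec e e from by module] at h3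
    exact ⟨fun _ => hineq, fun _ => h3⟩
  · -- the genuine case: t = -b/a > 1
    have ht1 : 1 ≤ -b/a := by rw [le_div_iff₀ ha]; linarith
    have hkey : a • ((1:ℝ) • (1 : Matrix (Fin n) (Fin n) ℝ)
          + (-(-b/a)) • Matrix.vecMulVec e e)
        = a • (1 : Matrix (Fin n) (Fin n) ℝ) + b • Matrix.vecMulVec e e := by
      match_scalars <;> field_simp
    constructor
    · intro hmem
      have h2 := hFcone (1/a) (by positivity) _ hmem
      rw [show (1/a) • (a • (1 : Matrix (Fin n) (Fin n) ℝ) + b • Matrix.vecMulVec e e)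
          = (1:ℝ) • (1 : Matrix (Fin n) (Fin n) ℝ)
            + (-(-b/a)) • Matrix.vecMulVec e e from by
        match_scalars <;> field_simp] at h2
      have := (aux_char' hp hchar e he (-b/a) ht1).1 h2
      rw [div_le_iff₀ ha] at this
      linarith [this]
    · intro hle
      have htp : -b/a ≤ p := by rw [div_le_iff₀ ha]; linarith
      have h1 := (aux_char' hp hchar e he (-b/a) ht1).2 htp
      have h2 := hFcone a ha.le _ h1
      rwa [hkey] at h2

lemma aux_notmem (hp : 1 ≤ p)
    (hFcone : ∀ t : ℝ, 0 ≤ t → ∀ A ∈ F, t • A ∈ F)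
    (hFpos : ∀ A ∈ F, ∀ P : Matrix (Fin n) (Fin n) ℝ, P.PosSemidef → A + P ∈ F)
    (hchar : ∀ e : Fin n → ℝ, (∑ i, e i * e i) = 1 → ∀ t : ℝ, 1 ≤ t →
      (((1 : Matrix (Fin n) (Fin n) ℝ) - Matrix.vecMulVec e e)
          - (t - 1) • Matrix.vecMulVec e e ∈ F ↔ t ≤ p))
    (e : Fin n → ℝ) (he : (∑ i, e i * e i) = 1) (a b : ℝ) (ha : a ≤ 0) (hb : b < 0) :
    a • (1 : Matrix (Fin n) (Fin n) ℝ) + b • Matrix.vecMulVec e e ∉ F := by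
  intro hmem
  set μ : ℝ := -b/(p+1) with hμdef
  have hμ : 0 < μ := div_pos (neg_pos.2 hb) (by linarith)
  have hPSD : ((μ - a) • (1 : Matrix (Fin n) (Fin n) ℝ)).PosSemidef := by
    have := aux_posSemidef (μ - a) 0 e he (by linarith) (by linarith)
    rwa [zero_smul, add_zero] at this
  have h2 := hFpos _ hmem _ hPSD
  have h3 := hFcone (1/μ) (by positivity) _ h2
  rw [show (1/μ) • ((a • (1 : Matrix (Fin n) (Fin n) ℝ) + b • Matrix.vecMulVec e e)
        + (μ - a) • (1 : Matrix (Fin n) (Fin n) ℝ))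
      = (1:ℝ) • (1 : Matrix (Fin n) (Fin n) ℝ) + (-(p+1)) • Matrix.vecMulVec e e from by
    have hb' : b ≠ 0 := ne_of_lt hb
    have hq2 : -(p*b) - b ≠ 0 := by nlinarith
    have hp1 : p + 1 ≠ 0 := by linarith
    rw [hμdef]
    match_scalars <;> field_simp <;> ring] at h3
  have := (aux_char' hp hchar e he (p+1) (by linarith)).1 h3
  linarith

end Mem


/-- If `F` is a cone subequation of Riesz characteristic `p`, its elliptic
regularization `F(δ) = Φ_{1+δ}(F)` has Riesz characteristic
`p' = n(1+δ)p/(n+δp)`; concretely, `Φ_{1+δ}(P_{e⊥} − (p-1) P_e)` is the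
positive multiple `((n+δp)/n) (P_{e⊥} − (p'-1) P_e)`. -/
theorem riesz_characteristic_of_elliptic_regularization {n : ℕ} (hn : 0 < n)
    (F : Set (Matrix (Fin n) (Fin n) ℝ))
    (hFsym : ∀ A ∈ F, A.IsHermitian)
    (hFclosed : IsClosed F)
    (hFcone : ∀ t : ℝ, 0 ≤ t → ∀ A ∈ F, t • A ∈ F)
    (hFpos : ∀ A ∈ F, ∀ P : Matrix (Fin n) (Fin n) ℝ, P.PosSemidef → A + P ∈ F)
    (hFinv : ∀ g : Matrix (Fin n) (Fin n) ℝ, g * gᵀ = 1 → ∀ A ∈ F, g * A * gᵀ ∈ F)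
    (p : ℝ) (hp : 1 ≤ p)
    (hchar : ∀ e : Fin n → ℝ, (∑ i, e i * e i) = 1 → ∀ t : ℝ, 1 ≤ t →
      (((1 : Matrix (Fin n) (Fin n) ℝ) - Matrix.vecMulVec e e)
          - (t - 1) • Matrix.vecMulVec e e ∈ F ↔ t ≤ p))
    (δ : ℝ) (hδ : 0 ≤ δ) :
    (∀ e : Fin n → ℝ, (∑ i, e i * e i) = 1 →
      PhiHomothety n (1 + δ)
          (((1 : Matrix (Fin n) (Fin n) ℝ) - Matrix.vecMulVec e e)
            - (p - 1) • Matrix.vecMulVec e e) =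
        (((n : ℝ) + δ * p) / (n : ℝ)) •
          ((((1 : Matrix (Fin n) (Fin n) ℝ) - Matrix.vecMulVec e e))
            - ((n : ℝ) * (1 + δ) * p / ((n : ℝ) + δ * p) - 1) •
                Matrix.vecMulVec e e)) ∧
    (∀ e : Fin n → ℝ, (∑ i, e i * e i) = 1 → ∀ t : ℝ, 1 ≤ t →
      (((1 : Matrix (Fin n) (Fin n) ℝ) - Matrix.vecMulVec e e)
          - (t - 1) • Matrix.vecMulVec e e ∈ PhiHomothety n (1 + δ) '' F ↔
        t ≤ (n : ℝ) * (1 + δ) * p / ((n : ℝ) + δ * p))) := by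
  have hn' : (n : ℝ) ≠ 0 := Nat.cast_ne_zero.2 hn.ne'
  have hn0 : (0:ℝ) < n := by exact_mod_cast hn
  have h1δ : (0:ℝ) < 1 + δ := by linarith
  have h1δ' : (1 + δ : ℝ) ≠ 0 := ne_of_gt h1δ
  have hδp : 0 ≤ δ * p := mul_nonneg hδ (by linarith)
  have hnp : (0:ℝ) < (n:ℝ) + δ * p := by linarith
  have hnp' : ((n:ℝ) + δ * p) ≠ 0 := ne_of_gt hnp
  constructor
  · intro e he
    rw [show ((1 : Matrix (Fin n) (Fin n) ℝ) - Matrix.vecMulVec e e)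
        - (p - 1) • Matrix.vecMulVec e e
        = (1:ℝ) • (1 : Matrix (Fin n) (Fin n) ℝ) + (-p) • Matrix.vecMulVec e e from by module,
      aux_phi hn (1+δ) 1 (-p) e he]
    match_scalars <;> field_simp <;> ring
  · intro e he t ht
    rw [show ((1 : Matrix (Fin n) (Fin n) ℝ) - Matrix.vecMulVec e e)
        - (t - 1) • Matrix.vecMulVec e e
        = (1:ℝ) • (1 : Matrix (Fin n) (Fin n) ℝ) + (-t) • Matrix.vecMulVec e e from by module]
    constructor
    · rintro ⟨B, hB, hBeq⟩
      have hBval : B = (((n:ℝ)*(1+δ) - δ*t)/((n:ℝ)*(1+δ))) • (1 : Matrix (Fin n) (Fin n) ℝ)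
          + (-t/(1+δ)) • Matrix.vecMulVec e e := by
        have h1 : B = PhiHomothety n (1/(1+δ)) (PhiHomothety n (1+δ) B) :=
          (aux_phi_inv hn (1+δ) h1δ' B).symm
        rw [hBeq] at h1
        rw [h1, aux_phi hn (1/(1+δ)) 1 (-t) e he]
        match_scalars <;> field_simp <;> ring
      rcases lt_or_ge 0 (((n:ℝ)*(1+δ) - δ*t)/((n:ℝ)*(1+δ))) with hc | hc
      · have h := (aux_mem hp hFcone hFpos hchar e he _ _ hc).1 (hBval ▸ hB)
        rw [le_div_iff₀ hnp]
        have c1 : (0:ℝ) < (n:ℝ)*(1+δ) := by positivity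
        have h2 := (mul_le_mul_iff_right₀ c1).2 h
        rw [show (n:ℝ)*(1+δ) * (-(-t/(1+δ))) = (n:ℝ)*t from by field_simp <;> ring,
          show (n:ℝ)*(1+δ) * ((((n:ℝ)*(1+δ) - δ*t)/((n:ℝ)*(1+δ))) * p)
            = ((n:ℝ)*(1+δ) - δ*t) * p from by field_simp <;> ring] at h2
        nlinarith [h2]
      · have hb : -t/(1+δ) < 0 := div_neg_of_neg_of_pos (by linarith) h1δ
        exact absurd (hBval ▸ hB)
          (aux_notmem hp hFcone hFpos hchar e he _ _ hc hb)
    · intro hle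
      have hle' : t * ((n:ℝ) + δ*p) ≤ (n:ℝ)*(1+δ)*p := by
        rw [← le_div_iff₀ hnp]; exact hle
      have hnum : 0 < (n:ℝ)*(1+δ) - δ*t := by
        have h1 : δ*(t*((n:ℝ)+δ*p)) ≤ δ*((n:ℝ)*(1+δ)*p) := mul_le_mul_of_nonneg_left hle' hδ
        nlinarith [h1, hnp, hn0, h1δ, mul_pos (mul_pos hn0 h1δ) hn0]
      have ha : 0 < ((n:ℝ)*(1+δ) - δ*t)/((n:ℝ)*(1+δ)) := div_pos hnum (by positivity)
      have hineq : -(-t/(1+δ)) ≤ (((n:ℝ)*(1+δ) - δ*t)/((n:ℝ)*(1+δ))) * p := by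
        have c1 : (0:ℝ) < (n:ℝ)*(1+δ) := by positivity
        rw [← mul_le_mul_iff_right₀ c1,
          show (n:ℝ)*(1+δ) * (-(-t/(1+δ))) = (n:ℝ)*t from by field_simp <;> ring,
          show (n:ℝ)*(1+δ) * ((((n:ℝ)*(1+δ) - δ*t)/((n:ℝ)*(1+δ))) * p)
            = ((n:ℝ)*(1+δ) - δ*t) * p from by field_simp <;> ring]
        nlinarith [hle']
      refine ⟨_, (aux_mem hp hFcone hFpos hchar e he _ _ ha).2 hineq, ?_⟩
      rw [aux_phi hn (1+δ) _ _ e he]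
      match_scalars <;> field_simp <;> ring
end
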